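/- arXiv:1004.4915 — 3 statements merged into one kernel-verified Lean document; each statement's English description precedes it below -/
import Mathlib

section
/- For every positive integer k, the number of k-weak edges in an undirected graph on n vertices is at most k(n−1). -/
namespace GraphSparsification

open scoped BigOperators

variable {V : Type*}

/-- An edge `e` crosses the cut `(S, Sᶜ)`. -/
def Crosses (S : Set V) (e : Sym2 V) : Prop :=
  ∃ u v, e = s(u, v) ∧ u ∈ S ∧ v ∉ S

/-- The value (number of edges) of the cut determined by `S` in the edge set `E`. -/
noncomputable def cutValue (E : Set (Sym2 V)) (S : Set V) : ℕ :=
  {e | e ∈ E ∧ Crosses S e}.ncard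

/-- The graph with vertex set `U` and edge set `F` is `k`-connected:
every cut has value at least `k`. -/
def IsKConnected (U : Set V) (F : Set (Sym2 V)) (k : ℕ) : Prop :=
  ∀ S : Set V, S ⊆ U → S.Nonempty → S ≠ U → k ≤ cutValue F S

/-- Edges of `E` with both endpoints in `U` (the vertex-induced subgraph). -/
def induced (E : Set (Sym2 V)) (U : Set V) : Set (Sym2 V) :=
  {e | e ∈ E ∧ ∀ x ∈ e, x ∈ U}

/-- `U` is a `k`-strong component of the graph with edge set `E`:
a maximal `k`-connected vertex-induced subgraph. -/
def IsStrongComponent (E : Set (Sym2 V)) (k : ℕ) (U : Set V) : Prop :=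
  U.Nonempty ∧ IsKConnected U (induced E U) k ∧
    ∀ U' : Set V, U ⊆ U' → IsKConnected U' (induced E U') k → U' = U

/-- Strong connectivity of an edge: the largest `k` such that some `k`-strong component
contains `e`. -/
noncomputable def strongConn (E : Set (Sym2 V)) (e : Sym2 V) : ℕ :=
  sSup {k | ∃ U : Set V, IsStrongComponent E k U ∧ e ∈ induced E U}

/-- Connectivity via edges of `F`. -/
def connRel (F : Set (Sym2 V)) : V → V → Prop :=
  Relation.ReflTransGen (fun a b => a ≠ b ∧ s(a, b) ∈ F)

/-- Number of connected components of the graph on `V` with edge set `F`. -/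
noncomputable def numComponents (F : Set (Sym2 V)) : ℕ :=
  Nat.card (Quot (fun a b : V => a ≠ b ∧ s(a, b) ∈ F))

/-- Weight of the cut determined by `S` in the weighted graph `(E', w)`. -/
noncomputable def cutWeight (E' : Set (Sym2 V)) (w : Sym2 V → ℝ) (S : Set V) : ℝ :=
  ∑ᶠ e ∈ {e | e ∈ E' ∧ Crosses S e}, w e

/-- The weighted graph `(E', w)` is an `ε`-sparsification of `E`: every weighted cut is
within a `(1 ± ε)` factor of the corresponding cut of `E`. -/
def IsSparsification (E E' : Set (Sym2 V)) (w : Sym2 V → ℝ) (ε : ℝ) : Prop :=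
  ∀ S : Set V, S.Nonempty → S ≠ Set.univ →
    (1 - ε) * (cutValue E S : ℝ) ≤ cutWeight E' w S ∧
      cutWeight E' w S ≤ (1 + ε) * (cutValue E S : ℝ)

/-- Probability weight of the outcome `σ` when each coin `a` comes up `true`
independently with probability `p a`. -/
noncomputable def bernWeight {α : Type*} [Fintype α] (p : α → ℝ) (σ : α → Bool) : ℝ :=
  ∏ a, if σ a then p a else 1 - p a

/-- Probability of the event `A` under independent coins with head-probabilities `p`. -/
noncomputable def Pr {α : Type*} [Fintype α] [DecidableEq α] (p : α → ℝ)
    (A : Set (α → Bool)) : ℝ :=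
  ∑ σ : α → Bool, A.indicator (bernWeight p) σ

/-- Expectation of `f` under independent coins with head-probabilities `p`. -/
noncomputable def Exp {α : Type*} [Fintype α] [DecidableEq α] (p : α → ℝ)
    (f : (α → Bool) → ℝ) : ℝ :=
  ∑ σ : α → Bool, bernWeight p σ * f σ

/-- Same-part relation of the partition `S_{l,k}` of refinement sampling after `k` rounds of
refinement at level `l` (the `Fin L` index `l` represents level `l+1`, and the `Fin K`
index `k` represents round `k+1`): `S_{l,0} = {V}`, and `S_{l,k+1}` splits each part of
`S_{l,k}` into the connected components spanned by edges whose `(l,k+1)`-coin is `true`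
and whose endpoints lie in one part of `S_{l,k}`. -/
def sameS (E : Set (Sym2 V)) {L K : ℕ} (σ : Fin L × Fin K × Sym2 V → Bool) (l : Fin L) :
    ℕ → V → V → Prop
  | 0 => fun _ _ => True
  | k + 1 => fun u v =>
      Relation.ReflTransGen (fun a b => a ≠ b ∧ s(a, b) ∈ E ∧ sameS E σ l k a b ∧
        ∃ hk : k < K, σ (l, ⟨k, hk⟩, s(a, b)) = true) u v

/-- `L(e)`: the minimum level `l ∈ {1, …, L}` such that the endpoints of `e` lie in
different parts of `S_{l,K}`. -/
noncomputable def levelOf (E : Set (Sym2 V)) {L K : ℕ} (σ : Fin L × Fin K × Sym2 V → Bool)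
    (e : Sym2 V) : ℕ :=
  sInf {m | ∃ l : Fin L, m = (l : ℕ) + 1 ∧ ∀ u v : V, e = s(u, v) → ¬ sameS E σ l K u v}

/-- Head-probabilities of the refinement-sampling coins: the coin of level `l` (represented
by the `Fin L` index `l - 1`) comes up `true` with probability `2^{-l}`. -/
noncomputable def pCoins {L K : ℕ} : Fin L × Fin K × Sym2 V → ℝ :=
  fun x => (1 / 2 : ℝ) ^ ((x.1 : ℕ) + 1)

/-- One step of Algorithm 3: process the arriving edge `e` with coins `coin` (indexed by
`J ∈ {1, …, LK}`), updating the partitions `D`, where `D 0` is the trivial partition `{V}`: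
for `J = 1, 2, …` in order, the parts of `D J` containing the endpoints of `e` are merged
if the `J`-th coin of `e` is `true` and the endpoints of `e` lie in one part of the
(already updated) partition number `J - 1`. -/
def processEdge (e : Sym2 V) (coin : ℕ → Bool) (D : ℕ → V → V → Prop) : ℕ → V → V → Prop
  | 0 => fun _ _ => True
  | J + 1 => fun u v =>
      Relation.EqvGen (fun a b => D (J + 1) a b ∨
        (coin (J + 1) = true ∧ s(a, b) = e ∧ processEdge e coin D J a b)) u v

/-- Initial state of the partitions of Algorithm 3: `D 0 = {V}` is the trivial partition and
all other partitions consist of singletons. -/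
def initD : ℕ → V → V → Prop
  | 0 => fun _ _ => True
  | _ + 1 => Eq

/-- State of the partitions of Algorithm 3 after the first `t` edges of the stream `es`
have been processed. -/
def DStream (coin : Sym2 V → ℕ → Bool) (es : ℕ → Sym2 V) : ℕ → ℕ → V → V → Prop
  | 0 => initD
  | t + 1 => processEdge (es t) (coin (es t)) (DStream coin es t)

/-- The endpoints of the edge `es t` lie in the same part of partition number `J` at the
moment `es t` arrives (i.e. while `es t` is being processed, partitions `0, …, J` having
already been updated). -/
def connectedAtArrival (coin : Sym2 V → ℕ → Bool) (es : ℕ → Sym2 V) (t J : ℕ) : Prop :=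
  ∀ u v : V, es t = s(u, v) → processEdge (es t) (coin (es t)) (DStream coin es t) J u v

/-- The coins of Algorithm 3, reindexed by `J = K(l-1) + k`. -/
def coinOf {L K : ℕ} (σ : Fin L × Fin K × Sym2 V → Bool) : Sym2 V → ℕ → Bool :=
  fun e J =>
    if h : 1 ≤ J ∧ (J - 1) / K < L ∧ (J - 1) % K < K then
      σ (⟨(J - 1) / K, h.2.1⟩, ⟨(J - 1) % K, h.2.2⟩, e)
    else false

/-- `L'(e_t)`: the minimum level `l ∈ {1, …, L}` such that the endpoints of the edge `es t`
lie in different parts of `D_{(l,K)}` (i.e. partition number `lK`) when `es t` is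
processed. -/
noncomputable def streamLevel (coin : Sym2 V → ℕ → Bool) (es : ℕ → Sym2 V) (K L t : ℕ) : ℕ :=
  sInf {l | 1 ≤ l ∧ l ≤ L ∧ ∀ u v : V, es t = s(u, v) → ¬ DStream coin es (t + 1) (l * K) u v}

lemma cutValue_le_card [Finite V] (F : Set (Sym2 V)) (S : Set V) :
    cutValue F S ≤ Nat.card (Sym2 V) := by
  rw [← Set.ncard_univ]
  exact Set.ncard_le_ncard (Set.subset_univ _) Set.finite_univ

/-- Every `k`-connected induced subgraph extends to a `k`-strong component. -/
lemma exists_strongComponent [Finite V] (E : Set (Sym2 V)) (k : ℕ) (U : Set V)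
    (hne : U.Nonempty) (hconn : IsKConnected U (induced E U) k) :
    ∃ U', IsStrongComponent E k U' ∧ U ⊆ U' := by
  set C : Set (Set V) := {U' : Set V | U ⊆ U' ∧ IsKConnected U' (induced E U') k} with hC
  have hCne : C.Nonempty := ⟨U, Set.Subset.rfl, hconn⟩
  obtain ⟨U', hU'C, hmax⟩ := Set.Finite.exists_maximalFor Set.ncard C (Set.toFinite C) hCne
  refine ⟨U', ⟨hne.mono hU'C.1, hU'C.2, ?_⟩, hU'C.1⟩
  intro U'' hsub hconn''
  have hmem : U'' ∈ C := ⟨hU'C.1.trans hsub, hconn''⟩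
  have hle := hmax hmem (Set.ncard_le_ncard hsub (Set.toFinite _))
  exact (Set.eq_of_subset_of_ncard_le hsub hle.ge (Set.toFinite _)).symm

/-- Edges of a `k`-connected induced subgraph have strong connectivity at least `k`. -/
lemma le_strongConn [Finite V] (E : Set (Sym2 V)) (hE : ∀ e ∈ E, ¬ e.IsDiag)
    (k : ℕ) (U : Set V) (hconn : IsKConnected U (induced E U) k)
    (e : Sym2 V) (he : e ∈ induced E U) : k ≤ strongConn E e := by
  induction e using Sym2.ind with
  | _ a b =>
  have hab : a ≠ b := by
    intro h; exact hE _ he.1 (Sym2.mk_isDiag_iff.mpr h)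
  have haU : a ∈ U := he.2 a (Sym2.mem_mk_left a b)
  have hbU : b ∈ U := he.2 b (Sym2.mem_mk_right a b)
  have hbdd : ∀ m ∈ {m | ∃ W : Set V, IsStrongComponent E m W ∧ s(a, b) ∈ induced E W},
      m ≤ Nat.card (Sym2 V) := by
    rintro m ⟨W, ⟨hWne, hWconn, -⟩, heW⟩
    have haW : a ∈ W := heW.2 a (Sym2.mem_mk_left a b)
    have hbW : b ∈ W := heW.2 b (Sym2.mem_mk_right a b)
    have hne : ({a} : Set V) ≠ W := by
      intro h
      have : b ∈ ({a} : Set V) := h ▸ hbW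
      exact hab (this.symm)
    have := hWconn {a} (Set.singleton_subset_iff.mpr haW) ⟨a, rfl⟩ hne
    exact this.trans (cutValue_le_card _ _)
  obtain ⟨U', hU', hUU'⟩ := exists_strongComponent E k U ⟨a, haU⟩ hconn
  have hmem : k ∈ {m | ∃ W : Set V, IsStrongComponent E m W ∧ s(a, b) ∈ induced E W} :=
    ⟨U', hU', ⟨he.1, fun x hx => hUU' (he.2 x hx)⟩⟩
  exact le_csSup ⟨Nat.card (Sym2 V), hbdd⟩ hmem

/-- Key counting bound, by induction on the size of the vertex set. -/
lemma weak_bound [Finite V] (E : Set (Sym2 V)) (hE : ∀ e ∈ E, ¬ e.IsDiag)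
    (k : ℕ) (hk : 0 < k) :
    ∀ (n : ℕ) (U : Set V), U.ncard ≤ n →
      {e | e ∈ induced E U ∧ strongConn E e < k}.ncard ≤ k * (U.ncard - 1) := by
  intro n
  induction n with
  | zero =>
    intro U hU
    have hUe : U = ∅ := by
      rcases Set.eq_empty_or_nonempty U with h | h
      · exact h
      · exact absurd ((Set.ncard_pos (Set.toFinite U)).mpr h) (by omega)
    have : {e | e ∈ induced E U ∧ strongConn E e < k} = ∅ := by
      ext e
      simp only [Set.mem_setOf_eq, Set.mem_empty_iff_false, iff_false, not_and]
      rintro ⟨heE, hend⟩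
      induction e using Sym2.ind with
      | _ a b =>
        exact absurd (hend a (Sym2.mem_mk_left a b)) (by simp [hUe])
    simp [this]
  | succ n ih =>
    intro U hU
    by_cases hle : U.ncard ≤ n
    · exact ih U hle
    have hUn : U.ncard = n + 1 := by omega
    have hUne : U.Nonempty := (Set.ncard_pos (Set.toFinite U)).mp (by omega)
    by_cases hconn : IsKConnected U (induced E U) k
    · have : {e | e ∈ induced E U ∧ strongConn E e < k} = ∅ := by
        ext e
        simp only [Set.mem_setOf_eq, Set.mem_empty_iff_false, iff_false, not_and, not_lt]
        intro he
        exact le_strongConn E hE k U hconn e he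
      simp [this]
    · simp only [IsKConnected, not_forall, not_le] at hconn
      obtain ⟨S, hSsub, hSne, hSneU, hcut⟩ := hconn
      -- cardinalities
      have hsub1 : S ⊂ U := ssubset_of_subset_of_ne hSsub hSneU
      have hS_lt : S.ncard < U.ncard := Set.ncard_lt_ncard hsub1 (Set.toFinite U)
      obtain ⟨a, haS⟩ := hSne
      have hsub2 : U \ S ⊂ U := by
        refine ssubset_of_subset_of_ne Set.diff_subset ?_
        intro h
        have : a ∈ U \ S := h.symm ▸ hSsub haS
        exact this.2 haS
      have hD_lt : (U \ S).ncard < U.ncard := Set.ncard_lt_ncard hsub2 (Set.toFinite U)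
      have hadd : (U \ S).ncard + S.ncard = U.ncard :=
        Set.ncard_diff_add_ncard_of_subset hSsub (Set.toFinite U)
      have hDne : (U \ S).Nonempty := by
        rcases Set.eq_empty_or_nonempty (U \ S) with h | h
        · exact absurd (Set.diff_eq_empty.mp h) (fun hUS => hSneU (Set.Subset.antisymm hSsub hUS))
        · exact h
      have hS1 : 1 ≤ S.ncard := (Set.ncard_pos (Set.toFinite S)).mpr ⟨a, haS⟩
      have hD1 : 1 ≤ (U \ S).ncard := (Set.ncard_pos (Set.toFinite _)).mpr hDne
      -- cover
      have hcover : {e | e ∈ induced E U ∧ strongConn E e < k} ⊆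
          ({e | e ∈ induced E S ∧ strongConn E e < k} ∪
            {e | e ∈ induced E (U \ S) ∧ strongConn E e < k}) ∪
          {e | e ∈ induced E U ∧ Crosses S e} := by
        intro e he
        induction e using Sym2.ind with
        | _ a b =>
          obtain ⟨⟨heE, hend⟩, hw⟩ := he
          have haU : a ∈ U := hend a (Sym2.mem_mk_left a b)
          have hbU : b ∈ U := hend b (Sym2.mem_mk_right a b)
          by_cases haS : a ∈ S <;> by_cases hbS : b ∈ S
          · refine Or.inl (Or.inl ⟨⟨heE, ?_⟩, hw⟩)
            intro x hx; rcases Sym2.mem_iff.mp hx with rfl | rfl <;> assumption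
          · exact Or.inr ⟨⟨heE, hend⟩, a, b, rfl, haS, hbS⟩
          · exact Or.inr ⟨⟨heE, hend⟩, b, a, Sym2.eq_swap.symm, hbS, haS⟩
          · refine Or.inl (Or.inr ⟨⟨heE, ?_⟩, hw⟩)
            intro x hx; rcases Sym2.mem_iff.mp hx with rfl | rfl <;> exact ⟨by assumption, by assumption⟩
      have hA := ih S (by omega)
      have hB := ih (U \ S) (by omega)
      have hC : {e | e ∈ induced E U ∧ Crosses S e}.ncard ≤ k - 1 := by
        have : cutValue (induced E U) S < k := hcut
        unfold cutValue at this
        omega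
      calc {e | e ∈ induced E U ∧ strongConn E e < k}.ncard
          ≤ (({e | e ∈ induced E S ∧ strongConn E e < k} ∪
              {e | e ∈ induced E (U \ S) ∧ strongConn E e < k}) ∪
              {e | e ∈ induced E U ∧ Crosses S e}).ncard :=
            Set.ncard_le_ncard hcover (Set.toFinite _)
        _ ≤ ({e | e ∈ induced E S ∧ strongConn E e < k} ∪
              {e | e ∈ induced E (U \ S) ∧ strongConn E e < k}).ncard +
              {e | e ∈ induced E U ∧ Crosses S e}.ncard := Set.ncard_union_le _ _
        _ ≤ ({e | e ∈ induced E S ∧ strongConn E e < k}.ncard +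
              {e | e ∈ induced E (U \ S) ∧ strongConn E e < k}.ncard) +
              {e | e ∈ induced E U ∧ Crosses S e}.ncard := by
            have := Set.ncard_union_le {e | e ∈ induced E S ∧ strongConn E e < k}
              {e | e ∈ induced E (U \ S) ∧ strongConn E e < k}
            omega
        _ ≤ (k * (S.ncard - 1) + k * ((U \ S).ncard - 1)) + (k - 1) := by omega
        _ ≤ k * (S.ncard - 1) + k * ((U \ S).ncard - 1) + k * 1 := by omega
        _ = k * ((S.ncard - 1) + ((U \ S).ncard - 1) + 1) := by ring
        _ = k * (U.ncard - 1) := by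
            congr 1
            omega

/-- For every positive integer `k`, the number of `k`-weak edges (edges `e` with
strong connectivity `s_e < k`) in an undirected graph on `n` vertices is at most `k (n - 1)`. -/
theorem k_weak_edges_bound {V : Type*} [Fintype V] (E : Set (Sym2 V))
    (hE : ∀ e ∈ E, ¬ e.IsDiag) (k : ℕ) (hk : 0 < k) :
    {e | e ∈ E ∧ strongConn E e < k}.ncard ≤ k * (Fintype.card V - 1) := by
  have h := weak_bound E hE k hk (Set.univ : Set V).ncard Set.univ le_rfl
  have hind : induced E (Set.univ : Set V) = E := by
    ext e; simp [induced]
  rw [hind, Set.ncard_univ, Nat.card_eq_fintype_card] at h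
  exact h

end GraphSparsification
end

section
/- Let C be a k-connected graph on at most n vertices, let ρ = 16(d+2) ln n, and suppose each edge of C is included independently with probability p ≥ min{4ρ/k, 1}. Then with probability at least 1 − n^{−d}, every cut of the sampled graph (with each sampled edge given weight 1/p) has weight within a factor (1 ± 1/2) of the value of the corresponding cut of C; in particular the sampled graph is connected. -/
namespace GraphSparsification

open scoped BigOperators

variable {V : Type*}

section Prob

variable {α : Type*} [Fintype α] [DecidableEq α] {p : ℝ}

lemma bernWeight_nonneg (hp0 : 0 ≤ p) (hp1 : p ≤ 1) (σ : α → Bool) :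
    0 ≤ bernWeight (fun _ => p) σ :=
  Finset.prod_nonneg fun a _ => by by_cases h : σ a <;> simp [h] <;> linarith

lemma sum_bernWeight : ∑ σ : α → Bool, bernWeight (fun _ => p) σ = 1 := by
  unfold bernWeight
  have h := (Finset.prod_univ_sum (fun _ : α => (Finset.univ : Finset Bool))
    (fun _ b => if b then p else 1 - p)).symm
  rw [Fintype.piFinset_univ] at h
  rw [h]
  have h1 : ∀ a : α, a ∈ Finset.univ → (∑ b : Bool, if b = true then p else 1 - p) = 1 := by
    intro a _; rw [Fintype.sum_bool]; norm_num
  rw [Finset.prod_congr rfl h1, Finset.prod_const_one]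

lemma Pr_nonneg (hp0 : 0 ≤ p) (hp1 : p ≤ 1) (A : Set (α → Bool)) :
    0 ≤ Pr (fun _ => p) A := by
  apply Finset.sum_nonneg
  intro σ _
  exact Set.indicator_nonneg (fun x _ => bernWeight_nonneg hp0 hp1 x) σ

lemma Pr_mono (hp0 : 0 ≤ p) (hp1 : p ≤ 1) {A B : Set (α → Bool)} (h : A ⊆ B) :
    Pr (fun _ => p) A ≤ Pr (fun _ => p) B := by
  apply Finset.sum_le_sum
  intro σ _
  exact Set.indicator_le_indicator_of_subset h (fun x => bernWeight_nonneg hp0 hp1 x) σ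

lemma Pr_compl (hp0 : 0 ≤ p) (hp1 : p ≤ 1) (A : Set (α → Bool)) :
    Pr (fun _ => p) Aᶜ = 1 - Pr (fun _ => p) A := by
  have key : ∀ σ : α → Bool, Aᶜ.indicator (bernWeight fun _ => p) σ
      = bernWeight (fun _ => p) σ - A.indicator (bernWeight fun _ => p) σ := by
    intro σ
    by_cases h : σ ∈ A
    · simp [Set.indicator_of_mem h, Set.indicator_of_notMem (by simpa using h : σ ∉ Aᶜ)]
    · simp [Set.indicator_of_notMem h, Set.indicator_of_mem (by simpa using h : σ ∈ Aᶜ)]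
  unfold Pr
  rw [Finset.sum_congr rfl (fun σ _ => key σ), Finset.sum_sub_distrib, sum_bernWeight]

lemma Pr_union_le_sum (hp0 : 0 ≤ p) (hp1 : p ≤ 1) {ι : Type*} (I : Finset ι)
    (A : ι → Set (α → Bool)) :
    Pr (fun _ => p) (⋃ i ∈ I, A i) ≤ ∑ i ∈ I, Pr (fun _ => p) (A i) := by
  unfold Pr
  rw [Finset.sum_comm]
  apply Finset.sum_le_sum
  intro σ _
  by_cases h : σ ∈ ⋃ i ∈ I, A i
  · obtain ⟨i, hi, hσ⟩ : ∃ i ∈ I, σ ∈ A i := by simpa using h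
    rw [Set.indicator_of_mem h]
    calc bernWeight (fun _ => p) σ = (A i).indicator (bernWeight fun _ => p) σ :=
          (Set.indicator_of_mem hσ _).symm
      _ ≤ ∑ i ∈ I, (A i).indicator (bernWeight fun _ => p) σ := by
          apply Finset.single_le_sum (f := fun i => (A i).indicator (bernWeight fun _ => p) σ)
            (fun i _ => Set.indicator_nonneg (fun x _ => bernWeight_nonneg hp0 hp1 x) σ) hi
  · rw [Set.indicator_of_notMem h]
    exact Finset.sum_nonneg fun i _ =>
      Set.indicator_nonneg (fun x _ => bernWeight_nonneg hp0 hp1 x) σ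

lemma Pr_le_Exp (hp0 : 0 ≤ p) (hp1 : p ≤ 1) (A : Set (α → Bool)) (f : (α → Bool) → ℝ)
    (hf0 : ∀ σ, 0 ≤ f σ) (hf1 : ∀ σ ∈ A, 1 ≤ f σ) :
    Pr (fun _ => p) A ≤ Exp (fun _ => p) f := by
  apply Finset.sum_le_sum
  intro σ _
  by_cases h : σ ∈ A
  · rw [Set.indicator_of_mem h]
    calc bernWeight (fun _ => p) σ = bernWeight (fun _ => p) σ * 1 := by ring
      _ ≤ bernWeight (fun _ => p) σ * f σ :=
        mul_le_mul_of_nonneg_left (hf1 σ h) (bernWeight_nonneg hp0 hp1 σ)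
  · rw [Set.indicator_of_notMem h]
    exact mul_nonneg (bernWeight_nonneg hp0 hp1 σ) (hf0 σ)

lemma Exp_const_mul (c : ℝ) (f : (α → Bool) → ℝ) :
    Exp (fun _ => p) (fun σ => c * f σ) = c * Exp (fun _ => p) f := by
  unfold Exp
  rw [Finset.mul_sum]
  exact Finset.sum_congr rfl fun σ _ => by ring

lemma Exp_prod (T : Finset α) (g : Bool → ℝ) :
    Exp (fun _ => p) (fun σ => ∏ e ∈ T, g (σ e))
      = ∏ e ∈ T, (p * g true + (1 - p) * g false) := by
  unfold Exp bernWeight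
  have key : ∀ σ : α → Bool, (∏ a, if σ a then p else 1 - p) * ∏ e ∈ T, g (σ e)
      = ∏ a, ((if σ a then p else 1 - p) * (if a ∈ T then g (σ a) else 1)) := by
    intro σ
    rw [Finset.prod_mul_distrib]
    congr 1
    rw [Finset.prod_ite_mem Finset.univ T (fun a => g (σ a)), Finset.univ_inter]
  rw [Finset.sum_congr rfl (fun σ _ => key σ)]
  have h := (Finset.prod_univ_sum (fun _ : α => (Finset.univ : Finset Bool))
    (fun a b => (if b then p else 1 - p) * (if a ∈ T then g b else 1))).symm
  rw [Fintype.piFinset_univ] at h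
  rw [h]
  have h2 : ∀ a : α, (∑ b : Bool, (if b then p else 1 - p) * (if a ∈ T then g b else 1))
      = if a ∈ T then p * g true + (1 - p) * g false else 1 := by
    intro a
    rw [Fintype.sum_bool]
    by_cases ha : a ∈ T <;> simp [ha] <;> ring
  rw [Finset.prod_congr rfl (fun a _ => h2 a), Finset.prod_ite_mem Finset.univ T, Finset.univ_inter]

/-- Number of sampled edges among `T`. -/
def cnt (T : Finset α) (σ : α → Bool) : ℕ := (T.filter fun e => σ e = true).card

lemma pow_cnt_eq_prod (T : Finset α) (c : ℝ) (σ : α → Bool) :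
    c ^ cnt T σ = ∏ e ∈ T, (if σ e = true then c else 1) := by
  rw [Finset.prod_ite (fun _ => c) (fun _ => (1:ℝ)), Finset.prod_const, Finset.prod_const_one,
    mul_one]
  rfl

lemma Exp_pow_cnt (T : Finset α) (c : ℝ) :
    Exp (fun _ => p) (fun σ => c ^ cnt T σ) = (p * c + (1 - p)) ^ T.card := by
  have : (fun σ : α → Bool => c ^ cnt T σ)
      = fun σ => ∏ e ∈ T, (fun b => if b = true then c else 1) (σ e) := by
    funext σ; exact pow_cnt_eq_prod T c σ
  rw [this, Exp_prod T (fun b => if b = true then c else 1)]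
  simp only [if_pos rfl]
  rw [Finset.prod_const]
  norm_num

end Prob

section Chernoff

variable {α : Type*} [Fintype α] [DecidableEq α] {p : ℝ}

lemma log_three_halves_ge : (2/5 : ℝ) ≤ Real.log (3/2) := by
  rw [Real.le_log_iff_exp_le (by norm_num : (0:ℝ) < 3/2)]
  by_contra hcon
  push_neg at hcon
  have h5 : Real.exp (2/5) ^ (5:ℕ) = Real.exp 2 := by
    rw [← Real.exp_nat_mul]; norm_num
  have hb : (3/2:ℝ)^(5:ℕ) < Real.exp (2/5) ^ (5:ℕ) :=
    pow_lt_pow_left₀ hcon (by norm_num) (by norm_num)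
  have he : Real.exp 2 < 7.3890560991 := by
    have e1 := Real.exp_one_lt_d9
    have h2 : Real.exp 2 = Real.exp 1 * Real.exp 1 := by rw [← Real.exp_add]; norm_num
    nlinarith [Real.exp_pos 1]
  rw [h5] at hb
  norm_num at hb
  linarith

lemma log_two_le : Real.log 2 ≤ 4/5 := by
  rw [Real.log_le_iff_le_exp (by norm_num : (0:ℝ) < 2)]
  by_contra hcon
  push_neg at hcon
  have h5 : Real.exp (4/5) ^ (5:ℕ) = Real.exp 4 := by
    rw [← Real.exp_nat_mul]; norm_num
  have hb : Real.exp (4/5) ^ (5:ℕ) < (2:ℝ)^(5:ℕ) :=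
    pow_lt_pow_left₀ hcon (Real.exp_pos _).le (by norm_num)
  have h4 : Real.exp 4 = Real.exp 1 ^ (4:ℕ) := by
    rw [← Real.exp_nat_mul]; norm_num
  have e1 := Real.exp_one_gt_d9
  have hp4 : (2.7182818283:ℝ)^(4:ℕ) ≤ Real.exp 1 ^ (4:ℕ) :=
    pow_le_pow_left₀ (by norm_num) e1.le 4
  rw [h5, h4] at hb
  norm_num at hb ⊢
  nlinarith [hb, hp4]

lemma chernoff_upper (hp0 : 0 ≤ p) (hp1 : p ≤ 1) (T : Finset α) :
    Pr (fun _ => p) {σ | (3/2) * (p * T.card) < (cnt T σ : ℝ)}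
      ≤ Real.exp (-(p * T.card) / 10) := by
  set c : ℝ := (T.card : ℝ) with hc
  have hc0 : 0 ≤ c := Nat.cast_nonneg _
  have hpc0 : 0 ≤ p * c := mul_nonneg hp0 hc0
  set s : ℝ := (3/2) * (p * c) with hs
  have hs0 : 0 ≤ s := by positivity
  have hM0 : 0 < (3/2:ℝ) ^ s := Real.rpow_pos_of_pos (by norm_num) s
  set M : ℝ := ((3/2:ℝ) ^ s)⁻¹ with hMdef
  have hMnn : 0 ≤ M := inv_nonneg.mpr hM0.le
  have step1 : Pr (fun _ => p) {σ | s < (cnt T σ : ℝ)}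
      ≤ Exp (fun _ => p) (fun σ => M * (3/2:ℝ) ^ (cnt T σ)) := by
    apply Pr_le_Exp hp0 hp1
    · intro σ; positivity
    · intro σ hσ
      have hσ' : s < (cnt T σ : ℝ) := hσ
      have h1 : (3/2:ℝ) ^ s ≤ (3/2:ℝ) ^ ((cnt T σ : ℕ) : ℝ) :=
        Real.rpow_le_rpow_of_exponent_le (by norm_num) hσ'.le
      rw [Real.rpow_natCast] at h1
      have hMs : M * ((3/2:ℝ) ^ s) = 1 := inv_mul_cancel₀ (ne_of_gt hM0)
      calc (1:ℝ) = M * ((3/2:ℝ) ^ s) := hMs.symm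
        _ ≤ M * (3/2:ℝ) ^ (cnt T σ) := mul_le_mul_of_nonneg_left h1 hMnn
  rw [Exp_const_mul, Exp_pow_cnt] at step1
  have hA : (p * (3/2) + (1 - p)) ^ T.card ≤ Real.exp (p * c / 2) := by
    have h2 : (1:ℝ) + p/2 ≤ Real.exp (p/2) := by
      have := Real.add_one_le_exp (p/2); linarith
    have h3 : (p * (3/2) + (1 - p)) ^ T.card ≤ (Real.exp (p/2)) ^ T.card := by
      have h1 : p * (3/2) + (1 - p) = 1 + p/2 := by ring
      rw [h1]; exact pow_le_pow_left₀ (by linarith) h2 _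
    calc (p * (3/2) + (1 - p)) ^ T.card ≤ (Real.exp (p/2)) ^ T.card := h3
      _ = Real.exp ((T.card : ℕ) * (p/2)) := (Real.exp_nat_mul _ _).symm
      _ = Real.exp (p * c / 2) := by rw [hc]; ring_nf
  have hM : M ≤ Real.exp (-(2/5) * s) := by
    have h1 : M = Real.exp (Real.log (3/2) * (-s)) := by
      rw [hMdef, ← Real.rpow_neg (by norm_num : (0:ℝ) ≤ 3/2) s,
        Real.rpow_def_of_pos (by norm_num : (0:ℝ) < 3/2)]
    rw [h1, Real.exp_le_exp]
    nlinarith [log_three_halves_ge]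
  have hfinal : M * (p * (3/2) + (1 - p)) ^ T.card
      ≤ Real.exp (-(2/5) * s) * Real.exp (p * c / 2) := by
    apply mul_le_mul hM hA (pow_nonneg (by linarith) _) (Real.exp_pos _).le
  calc Pr (fun _ => p) {σ | (3/2) * (p * T.card) < (cnt T σ : ℝ)}
      ≤ M * (p * (3/2) + (1 - p)) ^ T.card := step1
    _ ≤ Real.exp (-(2/5) * s) * Real.exp (p * c / 2) := hfinal
    _ = Real.exp (-(p * c) / 10) := by
        rw [← Real.exp_add]; congr 1; rw [hs]; ring
    _ = Real.exp (-(p * T.card) / 10) := by rw [hc]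

lemma chernoff_lower (hp0 : 0 ≤ p) (hp1 : p ≤ 1) (T : Finset α) :
    Pr (fun _ => p) {σ | (cnt T σ : ℝ) < (p * T.card) / 2}
      ≤ Real.exp (-(p * T.card) / 10) := by
  set c : ℝ := (T.card : ℝ) with hc
  have hc0 : 0 ≤ c := Nat.cast_nonneg _
  have hpc0 : 0 ≤ p * c := mul_nonneg hp0 hc0
  set s : ℝ := (p * c) / 2 with hs
  have hs0 : 0 ≤ s := by positivity
  have hM0 : 0 < (1/2:ℝ) ^ s := Real.rpow_pos_of_pos (by norm_num) s
  set M : ℝ := ((1/2:ℝ) ^ s)⁻¹ with hMdef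
  have hMnn : 0 ≤ M := inv_nonneg.mpr hM0.le
  have step1 : Pr (fun _ => p) {σ | (cnt T σ : ℝ) < s}
      ≤ Exp (fun _ => p) (fun σ => M * (1/2:ℝ) ^ (cnt T σ)) := by
    apply Pr_le_Exp hp0 hp1
    · intro σ; positivity
    · intro σ hσ
      have hσ' : (cnt T σ : ℝ) < s := hσ
      have h1 : (1/2:ℝ) ^ s ≤ (1/2:ℝ) ^ ((cnt T σ : ℕ) : ℝ) :=
        Real.rpow_le_rpow_of_exponent_ge (by norm_num) (by norm_num) hσ'.le
      rw [Real.rpow_natCast] at h1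
      have hMs : M * ((1/2:ℝ) ^ s) = 1 := inv_mul_cancel₀ (ne_of_gt hM0)
      calc (1:ℝ) = M * ((1/2:ℝ) ^ s) := hMs.symm
        _ ≤ M * (1/2:ℝ) ^ (cnt T σ) := mul_le_mul_of_nonneg_left h1 hMnn
  rw [Exp_const_mul, Exp_pow_cnt] at step1
  have hA : (p * (1/2) + (1 - p)) ^ T.card ≤ Real.exp (-(p * c) / 2) := by
    have h2 : (1:ℝ) - p/2 ≤ Real.exp (-(p/2)) := by
      have := Real.add_one_le_exp (-(p/2)); linarith
    have h3 : (p * (1/2) + (1 - p)) ^ T.card ≤ (Real.exp (-(p/2))) ^ T.card := by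
      have h1 : p * (1/2) + (1 - p) = 1 - p/2 := by ring
      rw [h1]; exact pow_le_pow_left₀ (by linarith) h2 _
    calc (p * (1/2) + (1 - p)) ^ T.card ≤ (Real.exp (-(p/2))) ^ T.card := h3
      _ = Real.exp ((T.card : ℕ) * (-(p/2))) := (Real.exp_nat_mul _ _).symm
      _ = Real.exp (-(p * c) / 2) := by rw [hc]; ring_nf
  have hM : M ≤ Real.exp ((4/5) * s) := by
    have h1 : M = Real.exp (Real.log (1/2) * (-s)) := by
      rw [hMdef, ← Real.rpow_neg (by norm_num : (0:ℝ) ≤ 1/2) s,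
        Real.rpow_def_of_pos (by norm_num : (0:ℝ) < 1/2)]
    have h2 : Real.log (1/2) = -Real.log 2 := by
      rw [one_div, Real.log_inv]
    rw [h1, h2, Real.exp_le_exp]
    nlinarith [log_two_le, Real.log_pos (by norm_num : (1:ℝ) < 2)]
  have hfinal : M * (p * (1/2) + (1 - p)) ^ T.card
      ≤ Real.exp ((4/5) * s) * Real.exp (-(p * c) / 2) := by
    apply mul_le_mul hM hA (pow_nonneg (by linarith) _) (Real.exp_pos _).le
  calc Pr (fun _ => p) {σ | (cnt T σ : ℝ) < (p * T.card) / 2}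
      ≤ M * (p * (1/2) + (1 - p)) ^ T.card := step1
    _ ≤ Real.exp ((4/5) * s) * Real.exp (-(p * c) / 2) := hfinal
    _ = Real.exp (-(p * c) / 10) := by
        rw [← Real.exp_add]; congr 1; rw [hs]; ring
    _ = Real.exp (-(p * T.card) / 10) := by rw [hc]

end Chernoff

section Counting

variable {W : Type*} [Fintype W] [DecidableEq W]

/-- `S` is a union of classes of `r`. -/
def Compat (r : Setoid W) (S : Set W) : Prop := ∀ a b : W, r a b → (a ∈ S ↔ b ∈ S)

/-- Cuts compatible with the partition `r` of value at most `B`. -/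
def cutsSet (F : Set (Sym2 W)) (r : Setoid W) (B : ℕ) : Set (Set W) :=
  {S | Compat r S ∧ S.Nonempty ∧ S ≠ Set.univ ∧ cutValue F S ≤ B}

lemma cutsSet_ncard_le_two_pow (F : Set (Sym2 W)) (r : Setoid W) (B : ℕ) :
    (cutsSet F r B).ncard ≤ 2 ^ Nat.card (Quotient r) := by
  classical
  have hinj : Function.Injective
      (fun S : (cutsSet F r B) =>
        (fun q : Quotient r => ∃ a : W, Quotient.mk r a = q ∧ a ∈ (S : Set W))) := by
    intro S S' h
    obtain ⟨hS, _, _, _⟩ := S.2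
    obtain ⟨hS', _, _, _⟩ := S'.2
    apply Subtype.ext
    ext a
    constructor
    · intro ha
      have h1 : (∃ b : W, Quotient.mk r b = Quotient.mk r a ∧ b ∈ (S : Set W))
          = (∃ b : W, Quotient.mk r b = Quotient.mk r a ∧ b ∈ (S' : Set W)) :=
        congrFun h (Quotient.mk r a)
      obtain ⟨b, hb, hbS⟩ := cast h1 ⟨a, rfl, ha⟩
      exact (hS' b a (Quotient.eq.mp hb)).mp hbS
    · intro ha
      have h1 : (∃ b : W, Quotient.mk r b = Quotient.mk r a ∧ b ∈ (S : Set W))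
          = (∃ b : W, Quotient.mk r b = Quotient.mk r a ∧ b ∈ (S' : Set W)) :=
        congrFun h (Quotient.mk r a)
      obtain ⟨b, hb, hbS⟩ := cast h1.symm ⟨a, rfl, ha⟩
      exact (hS b a (Quotient.eq.mp hb)).mp hbS
  have h1 : Nat.card (cutsSet F r B) ≤ Nat.card (Quotient r → Prop) :=
    Nat.card_le_card_of_injective _ hinj
  have h2 : Nat.card (Quotient r → Prop) = Nat.card Prop ^ Nat.card (Quotient r) :=
    Nat.card_fun
  have h3 : Nat.card Prop = 2 := by
    rw [Nat.card_congr Equiv.propEquivBool]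
    simp [Nat.card_eq_fintype_card]
  rw [← Nat.card_coe_set_eq]
  calc Nat.card (cutsSet F r B) ≤ Nat.card (Quotient r → Prop) := h1
    _ = 2 ^ Nat.card (Quotient r) := by rw [h2, h3]

lemma compat_class (r : Setoid W) (q : Quotient r) :
    Compat r {a : W | Quotient.mk r a = q} := by
  intro a b hab
  have h : Quotient.mk r a = Quotient.mk r b := Quotient.sound hab
  simp only [Set.mem_setOf_eq, h]

/-- Edges joining two distinct classes of `r`. -/
def interEdges (F : Set (Sym2 W)) (r : Setoid W) : Set (Sym2 W) :=
  {e | e ∈ F ∧ ∃ a b : W, e = s(a, b) ∧ ¬ r a b}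

lemma cross_subset_inter {F : Set (Sym2 W)} {r : Setoid W} {S : Set W} (hS : Compat r S) :
    {e | e ∈ F ∧ Crosses S e} ⊆ interEdges F r := by
  rintro e ⟨heF, u, v, rfl, huS, hvS⟩
  exact ⟨heF, u, v, rfl, fun h => hvS ((hS u v h).mp huS)⟩

/-- Contract the edge `e`: the setoid generated by `r` and identifying the endpoints of
`e`. -/
def contractS (r : Setoid W) (e : Sym2 W) : Setoid W :=
  ⟨Relation.EqvGen (fun x y => r x y ∨ (x ∈ e ∧ y ∈ e)),
   Relation.EqvGen.is_equivalence _⟩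

lemma compat_contract {r : Setoid W} {S : Set W} {e : Sym2 W} (hS : Compat r S)
    (hnc : ¬ Crosses S e) : Compat (contractS r e) S := by
  have hsame : ∀ x ∈ e, ∀ y ∈ e, (x ∈ S ↔ y ∈ S) := by
    induction e using Sym2.ind with
    | _ u v =>
      have huv : u ∈ S → v ∈ S := fun hu => by
        by_contra hv; exact hnc ⟨u, v, rfl, hu, hv⟩
      have hvu : v ∈ S → u ∈ S := fun hv => by
        by_contra hu; exact hnc ⟨v, u, Sym2.eq_swap, hv, hu⟩
      intro x hx y hy
      rw [Sym2.mem_iff] at hx hy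
      rcases hx with rfl | rfl <;> rcases hy with rfl | rfl <;> tauto
  intro a b hab
  have hab' : Relation.EqvGen (fun x y => r x y ∨ (x ∈ e ∧ y ∈ e)) a b := hab
  clear hab
  induction hab' with
  | rel x y h =>
    rcases h with h | ⟨hx, hy⟩
    · exact hS x y h
    · exact hsame x hx y hy
  | refl x => exact Iff.rfl
  | symm x y _ ih => exact ih.symm
  | trans x y z _ _ ih1 ih2 => exact ih1.trans ih2

lemma card_quotient_contract_lt {r : Setoid W} {e : Sym2 W} {a b : W}
    (he : e = s(a, b)) (hab : ¬ r a b) :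
    Nat.card (Quotient (contractS r e)) < Nat.card (Quotient r) := by
  classical
  letI : Fintype (Quotient r) := Fintype.ofFinite _
  letI : Fintype (Quotient (contractS r e)) := Fintype.ofFinite _
  rw [Nat.card_eq_fintype_card, Nat.card_eq_fintype_card]
  have hmap : Relator.LiftFun (⇑r : W → W → Prop) (⇑(contractS r e) : W → W → Prop) id id :=
    fun x y h => Relation.EqvGen.rel x y (Or.inl h)
  set f : Quotient r → Quotient (contractS r e) := Quotient.map' id hmap with hf
  have hcomm : ∀ x : W, f (Quotient.mk r x) = Quotient.mk (contractS r e) x := fun x => rfl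
  have hsurj : Function.Surjective f := by
    intro q
    obtain ⟨x, hx⟩ := Quotient.exists_rep q
    exact ⟨Quotient.mk r x, by rw [hcomm]; exact hx⟩
  have hfab : f (Quotient.mk r a) = f (Quotient.mk r b) := by
    rw [hcomm, hcomm]
    exact Quotient.sound (Relation.EqvGen.rel a b
      (Or.inr ⟨by rw [he]; exact Sym2.mem_mk_left a b, by rw [he]; exact Sym2.mem_mk_right a b⟩))
  have hne : Quotient.mk r a ≠ Quotient.mk r b := fun h => hab (Quotient.eq.mp h)
  set g := Function.surjInv hsurj with hg
  have hgi : Function.Injective g := Function.injective_surjInv hsurj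
  have hri : ∀ q, f (g q) = q := Function.rightInverse_surjInv hsurj
  have hmiss : (Quotient.mk r a) ∉ Set.range g ∨ (Quotient.mk r b) ∉ Set.range g := by
    by_contra hcon
    push_neg at hcon
    obtain ⟨⟨u, hu⟩, ⟨v, hv⟩⟩ := hcon
    have h1 : f (Quotient.mk r a) = u := by rw [← hu]; exact hri u
    have h2 : f (Quotient.mk r b) = v := by rw [← hv]; exact hri v
    have : u = v := by rw [← h1, ← h2, hfab]
    exact hne (by rw [← hu, ← hv, this])
  rcases hmiss with h | h
  · exact Fintype.card_lt_of_injective_of_notMem g hgi h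
  · exact Fintype.card_lt_of_injective_of_notMem g hgi h

lemma count_cuts_aux (F : Set (Sym2 W)) (k j : ℕ) (hk : 0 < k) (hj : 0 < j)
    (hconn : ∀ S : Set W, S.Nonempty → S ≠ Set.univ → k ≤ cutValue F S) :
    ∀ (fuel : ℕ) (r : Setoid W), Nat.card (Quotient r) ≤ fuel →
      (cutsSet F r (j * k)).ncard
        ≤ 2 ^ (2 * j) * Nat.choose (max (Nat.card (Quotient r)) (2 * j)) (2 * j) := by
  intro fuel
  induction fuel with
  | zero =>
    intro r hr
    have h0 : Nat.card (Quotient r) ≤ 2 * j := by omega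
    calc (cutsSet F r (j * k)).ncard ≤ 2 ^ Nat.card (Quotient r) :=
          cutsSet_ncard_le_two_pow F r _
      _ ≤ 2 ^ (2 * j) * Nat.choose (max (Nat.card (Quotient r)) (2 * j)) (2 * j) := by
          rw [Nat.max_eq_right h0, Nat.choose_self, mul_one]
          exact Nat.pow_le_pow_right (by norm_num) h0
  | succ n ih =>
    intro r hr
    by_cases hbase : Nat.card (Quotient r) ≤ 2 * j
    · calc (cutsSet F r (j * k)).ncard ≤ 2 ^ Nat.card (Quotient r) :=
            cutsSet_ncard_le_two_pow F r _
        _ ≤ 2 ^ (2 * j) * Nat.choose (max (Nat.card (Quotient r)) (2 * j)) (2 * j) := by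
            rw [Nat.max_eq_right hbase, Nat.choose_self, mul_one]
            exact Nat.pow_le_pow_right (by norm_num) hbase
    · push_neg at hbase
      classical
      letI : Fintype (Quotient r) := Fintype.ofFinite _
      letI : Fintype (Set W) := Fintype.ofFinite _
      set t := Nat.card (Quotient r) with ht
      have ht1 : 2 * j + 1 ≤ t := hbase
      set Cl : Quotient r → Set W := fun q => {a : W | Quotient.mk r a = q} with hCl
      have hClne : ∀ q, (Cl q).Nonempty := by
        intro q; obtain ⟨a, ha⟩ := Quotient.exists_rep q; exact ⟨a, ha⟩
      have hClproper : ∀ q, Cl q ≠ Set.univ := by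
        intro q hq
        have hcard : 1 < Fintype.card (Quotient r) := by
          rw [← Nat.card_eq_fintype_card]; omega
        obtain ⟨q', hq'⟩ := Fintype.exists_ne_of_one_lt_card hcard q
        obtain ⟨b, hb⟩ := Quotient.exists_rep q'
        have hbmem : b ∈ Cl q := by rw [hq]; trivial
        exact hq' (by rw [← hb]; exact hbmem)
      set Er : Set (Sym2 W) := interEdges F r with hEr
      set ErF : Finset (Sym2 W) := (Set.toFinite Er).toFinset with hErF
      set m := ErF.card with hm
      set CF : Finset (Set W) := (Set.toFinite (cutsSet F r (j * k))).toFinset with hCF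
      set N := CF.card with hN
      have hNncard : (cutsSet F r (j * k)).ncard = N := Set.ncard_eq_toFinset_card _ _
      have hCFmem : ∀ S, S ∈ CF ↔ S ∈ cutsSet F r (j * k) := fun S =>
        Set.Finite.mem_toFinset _
      have hErFmem : ∀ e, e ∈ ErF ↔ e ∈ Er := fun e => Set.Finite.mem_toFinset _
      have hcrossF : ∀ S : Set W, Compat r S →
          {e | e ∈ F ∧ Crosses S e} = ↑(ErF.filter fun e => Crosses S e) := by
        intro S hS
        ext e
        simp only [Finset.coe_filter, Set.mem_setOf_eq, hErFmem]
        constructor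
        · intro h; exact ⟨cross_subset_inter hS h, h.2⟩
        · rintro ⟨h1, h2⟩; exact ⟨h1.1, h2⟩
      have hcutF : ∀ S : Set W, Compat r S →
          cutValue F S = (ErF.filter fun e => Crosses S e).card := by
        intro S hS
        rw [cutValue, hcrossF S hS, Set.ncard_coe_finset]
      -- degree sum : t * k ≤ 2 * m
      have hdeg : t * k ≤ 2 * m := by
        have hq : ∀ q : Quotient r, k ≤ (ErF.filter fun e => Crosses (Cl q) e).card := by
          intro q
          rw [← hcutF (Cl q) (compat_class r q)]
          exact hconn _ (hClne q) (hClproper q)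
        have hsum1 : t * k ≤ ∑ q : Quotient r, (ErF.filter fun e => Crosses (Cl q) e).card := by
          have h := Finset.card_nsmul_le_sum Finset.univ
            (fun q : Quotient r => (ErF.filter fun e => Crosses (Cl q) e).card) k
            (fun q _ => hq q)
          rw [Finset.card_univ, ← Nat.card_eq_fintype_card, ← ht, smul_eq_mul] at h
          exact h
        have hswap : ∑ q : Quotient r, (ErF.filter fun e => Crosses (Cl q) e).card
            = ∑ e ∈ ErF, (Finset.univ.filter fun q : Quotient r => Crosses (Cl q) e).card := by
          simp only [Finset.card_filter]
          exact Finset.sum_comm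
        have htwo : ∀ e ∈ ErF,
            (Finset.univ.filter fun q : Quotient r => Crosses (Cl q) e).card = 2 := by
          intro e he
          rw [hErFmem] at he
          obtain ⟨heF, a, b, rfl, hab⟩ := he
          have hset : (Finset.univ.filter fun q : Quotient r => Crosses (Cl q) s(a, b))
              = {Quotient.mk r a, Quotient.mk r b} := by
            ext q
            simp only [Finset.mem_filter, Finset.mem_univ, true_and, Finset.mem_insert,
              Finset.mem_singleton]
            constructor
            · rintro ⟨u, v, huv, hu, hv⟩
              have hu' : Quotient.mk r u = q := hu
              rcases Sym2.eq_iff.mp huv with ⟨h1, h2⟩ | ⟨h1, h2⟩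
              · left; rw [← hu', ← h1]
              · right; rw [← hu', ← h2]
            · rintro (rfl | rfl)
              · exact ⟨a, b, rfl, rfl, fun h => hab (r.iseqv.symm (Quotient.eq.mp h))⟩
              · exact ⟨b, a, Sym2.eq_swap, rfl, fun h => hab (Quotient.eq.mp h)⟩
          rw [hset]
          exact Finset.card_pair fun h => hab (Quotient.eq.mp h)
        have hsum2 : ∑ e ∈ ErF, (Finset.univ.filter fun q : Quotient r => Crosses (Cl q) e).card
            = 2 * m := by
          rw [Finset.sum_congr rfl htwo, Finset.sum_const, smul_eq_mul, hm]
          ring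
        omega
      have hjk_lt_m : j * k < m := by
        have h1 : (2 * j + 1) * k ≤ t * k := Nat.mul_le_mul_right k ht1
        have h2 : (2 * j + 1) * k = 2 * (j * k) + k := by ring
        omega
      have hm0 : 0 < m := Nat.lt_of_le_of_lt (Nat.zero_le _) hjk_lt_m
      -- row counts
      have hrow : ∀ S ∈ CF, m - j * k ≤ (ErF.filter fun e => ¬ Crosses S e).card := by
        intro S hS
        rw [hCFmem] at hS
        obtain ⟨hcomp, _, _, hval⟩ := hS
        have htot := Finset.card_filter_add_card_filter_not
          (s := ErF) (p := fun e => Crosses S e)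
        have hcv : (ErF.filter fun e => Crosses S e).card ≤ j * k := by
          rw [← hcutF S hcomp]; exact hval
        omega
      -- column counts via induction hypothesis
      have hcol : ∀ e ∈ ErF, (CF.filter fun S => ¬ Crosses S e).card
          ≤ 2 ^ (2 * j) * Nat.choose (max (t - 1) (2 * j)) (2 * j) := by
        intro e he
        rw [hErFmem] at he
        obtain ⟨heF, a, b, heab, hab⟩ := he
        have hsub : ↑(CF.filter fun S => ¬ Crosses S e) ⊆ cutsSet F (contractS r e) (j * k) := by
          intro S hS
          simp only [Finset.coe_filter, Set.mem_setOf_eq, hCFmem] at hS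
          obtain ⟨⟨hcomp, hne, hproper, hval⟩, hnc⟩ := hS
          exact ⟨compat_contract hcomp hnc, hne, hproper, hval⟩
        have hcard : (CF.filter fun S => ¬ Crosses S e).card
            ≤ (cutsSet F (contractS r e) (j * k)).ncard := by
          rw [← Set.ncard_coe_finset]
          exact Set.ncard_le_ncard hsub (Set.toFinite _)
        have hlt : Nat.card (Quotient (contractS r e)) < t := card_quotient_contract_lt heab hab
        have hIH := ih (contractS r e) (by omega)
        refine hcard.trans (hIH.trans ?_)
        have hmax : max (Nat.card (Quotient (contractS r e))) (2 * j) ≤ max (t - 1) (2 * j) :=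
          max_le_max (by omega) le_rfl
        exact Nat.mul_le_mul_left _ (Nat.choose_mono _ hmax)
      have hdouble : ∑ S ∈ CF, (ErF.filter fun e => ¬ Crosses S e).card
          = ∑ e ∈ ErF, (CF.filter fun S => ¬ Crosses S e).card := by
        simp only [Finset.card_filter]
        exact Finset.sum_comm
      set A := 2 ^ (2 * j) * Nat.choose (max (t - 1) (2 * j)) (2 * j) with hA
      have hmain : N * (m - j * k) ≤ m * A := by
        calc N * (m - j * k) = ∑ _S ∈ CF, (m - j * k) := by
              rw [Finset.sum_const, smul_eq_mul, hN]
          _ ≤ ∑ S ∈ CF, (ErF.filter fun e => ¬ Crosses S e).card := Finset.sum_le_sum hrow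
          _ = ∑ e ∈ ErF, (CF.filter fun S => ¬ Crosses S e).card := hdouble
          _ ≤ ∑ _e ∈ ErF, A := Finset.sum_le_sum hcol
          _ = m * A := by rw [Finset.sum_const, smul_eq_mul, hm]
      have hkey : (t - 2 * j) * m ≤ t * (m - j * k) := by
        have h1 : t * (j * k) ≤ 2 * j * m := by
          calc t * (j * k) = j * (t * k) := by ring
            _ ≤ j * (2 * m) := Nat.mul_le_mul_left _ hdeg
            _ = 2 * j * m := by ring
        calc (t - 2 * j) * m = t * m - 2 * j * m := by rw [Nat.sub_mul]
          _ ≤ t * m - t * (j * k) := Nat.sub_le_sub_left h1 _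
          _ = t * (m - j * k) := by
              rw [mul_comm t (m - j * k), Nat.sub_mul, mul_comm m t, mul_comm (j * k) t]
      have hstep : N * (t - 2 * j) ≤ t * A := by
        apply Nat.le_of_mul_le_mul_right _ hm0
        calc N * (t - 2 * j) * m = (t - 2 * j) * m * N := by ring
          _ ≤ t * (m - j * k) * N := Nat.mul_le_mul_right N hkey
          _ = t * (N * (m - j * k)) := by ring
          _ ≤ t * (m * A) := Nat.mul_le_mul_left t hmain
          _ = t * A * m := by ring
      have hmaxt1 : max (t - 1) (2 * j) = t - 1 := Nat.max_eq_left (by omega)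
      rw [hmaxt1] at hA
      -- the binomial identity (t - 2j) * C(t, 2j) = t * C(t-1, 2j)
      have hid : (t - 2 * j) * Nat.choose t (2 * j) = t * Nat.choose (t - 1) (2 * j) := by
        have h2jt : 2 * j ≤ t := by omega
        have h2jt1 : 2 * j ≤ t - 1 := by omega
        have f1 := Nat.choose_mul_factorial_mul_factorial h2jt
        have f2 := Nat.choose_mul_factorial_mul_factorial h2jt1
        have e3 : (t - 2 * j).factorial = (t - 2 * j) * (t - 2 * j - 1).factorial :=
          (Nat.mul_factorial_pred (by omega)).symm
        have e4 : t.factorial = t * (t - 1).factorial :=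
          (Nat.mul_factorial_pred (by omega)).symm
        have e5 : t - 1 - 2 * j = t - 2 * j - 1 := by omega
        apply Nat.eq_of_mul_eq_mul_right
          (Nat.mul_pos (Nat.factorial_pos (2 * j)) (Nat.factorial_pos (t - 2 * j - 1)))
        calc (t - 2 * j) * Nat.choose t (2 * j) * ((2 * j).factorial * (t - 2 * j - 1).factorial)
            = Nat.choose t (2 * j) * (2 * j).factorial * ((t - 2 * j) * (t - 2 * j - 1).factorial) := by
              ring
          _ = Nat.choose t (2 * j) * (2 * j).factorial * (t - 2 * j).factorial := by rw [← e3]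
          _ = t.factorial := f1
          _ = t * (t - 1).factorial := e4
          _ = t * (Nat.choose (t - 1) (2 * j) * (2 * j).factorial * (t - 1 - 2 * j).factorial) := by
              rw [f2]
          _ = t * Nat.choose (t - 1) (2 * j) * ((2 * j).factorial * (t - 2 * j - 1).factorial) := by
              rw [e5]; ring
      have hfinal : N ≤ 2 ^ (2 * j) * Nat.choose t (2 * j) := by
        apply Nat.le_of_mul_le_mul_right _ (show 0 < t - 2 * j by omega)
        calc N * (t - 2 * j) ≤ t * A := hstep
          _ = 2 ^ (2 * j) * (t * Nat.choose (t - 1) (2 * j)) := by rw [hA]; ring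
          _ = 2 ^ (2 * j) * ((t - 2 * j) * Nat.choose t (2 * j)) := by rw [← hid]
          _ = 2 ^ (2 * j) * Nat.choose t (2 * j) * (t - 2 * j) := by ring
      rw [hNncard, Nat.max_eq_left (by omega : 2 * j ≤ t)]
      exact hfinal

end Counting

section Bridge

variable {W : Type*} [Fintype W] [DecidableEq W]

lemma Pr_union_le {α : Type*} [Fintype α] [DecidableEq α] {p : ℝ} (hp0 : 0 ≤ p) (hp1 : p ≤ 1)
    (A B : Set (α → Bool)) :
    Pr (fun _ => p) (A ∪ B) ≤ Pr (fun _ => p) A + Pr (fun _ => p) B := by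
  unfold Pr
  rw [← Finset.sum_add_distrib]
  apply Finset.sum_le_sum
  intro σ _
  have h1 := Set.indicator_nonneg (s := A) (fun x _ => bernWeight_nonneg hp0 hp1 x) σ
  have h2 := Set.indicator_nonneg (s := B) (fun x _ => bernWeight_nonneg hp0 hp1 x) σ
  by_cases h : σ ∈ A ∪ B
  · rw [Set.indicator_of_mem h]
    rcases h with h | h
    · rw [Set.indicator_of_mem h]; linarith
    · rw [Set.indicator_of_mem h]; linarith
  · rw [Set.indicator_of_notMem h]; linarith

/-- The crossing edges of `S` in `F`, as a finset. -/
noncomputable def TS (F : Set (Sym2 W)) (S : Set W) : Finset (Sym2 W) :=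
  (Set.toFinite {e | e ∈ F ∧ Crosses S e}).toFinset

lemma TS_card (F : Set (Sym2 W)) (S : Set W) : (TS F S).card = cutValue F S :=
  (Set.ncard_eq_toFinset_card _ _).symm

lemma TS_mem (F : Set (Sym2 W)) (S : Set W) (e : Sym2 W) :
    e ∈ TS F S ↔ e ∈ F ∧ Crosses S e := Set.Finite.mem_toFinset _

lemma cutWeight_eq (F : Set (Sym2 W)) (p : ℝ) (σ : Sym2 W → Bool) (S : Set W) :
    cutWeight {e | e ∈ F ∧ σ e = true} (fun _ => 1 / p) S
      = (cnt (TS F S) σ : ℝ) * (1 / p) := by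
  classical
  unfold cutWeight cnt
  have hset : {e | e ∈ {e | e ∈ F ∧ σ e = true} ∧ Crosses S e}
      = ↑((TS F S).filter fun e => σ e = true) := by
    ext e
    simp only [Finset.coe_filter, Set.mem_setOf_eq, TS, Set.Finite.mem_toFinset]
    tauto
  rw [hset, finsum_mem_coe_finset, Finset.sum_const, nsmul_eq_mul]

lemma conn_of_cuts (E' : Set (Sym2 W))
    (hcut : ∀ S : Set W, S.Nonempty → S ≠ Set.univ → ∃ e ∈ E', Crosses S e) :
    ∀ u v : W, connRel E' u v := by
  intro u v
  by_contra hv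
  set S := {x : W | connRel E' u x} with hSdef
  have huS : u ∈ S := Relation.ReflTransGen.refl
  have hSproper : S ≠ Set.univ := by
    intro h
    exact hv (by rw [show S = Set.univ from h]; trivial : v ∈ S)
  obtain ⟨e, heE, hcr⟩ := hcut S ⟨u, huS⟩ hSproper
  obtain ⟨a, b, rfl, haS, hbS⟩ := hcr
  have hab : a ≠ b := fun h => hbS (h ▸ haS)
  exact hbS (Relation.ReflTransGen.tail haS ⟨hab, heE⟩)

lemma k_le_pred_card (F : Set (Sym2 W)) (k : ℕ)
    (hconn : ∀ S : Set W, S.Nonempty → S ≠ Set.univ → k ≤ cutValue F S)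
    (h2 : 2 ≤ Fintype.card W) : k + 1 ≤ Fintype.card W := by
  classical
  have hpos : 0 < Fintype.card W := by omega
  obtain ⟨v⟩ := Fintype.card_pos_iff.mp hpos
  obtain ⟨w, hw⟩ := Fintype.exists_ne_of_one_lt_card (by omega) v
  have hproper : ({v} : Set W) ≠ Set.univ := by
    intro h
    have hmem : w ∈ ({v} : Set W) := by rw [h]; trivial
    exact hw hmem
  have hk := hconn {v} ⟨v, rfl⟩ hproper
  have hsub : {e | e ∈ F ∧ Crosses {v} e} ⊆ (fun w' => s(v, w')) '' {w' : W | w' ≠ v} := by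
    rintro e ⟨heF, u, w', rfl, hu, hw'⟩
    have hu' : u = v := hu
    refine ⟨w', fun h => hw' h, ?_⟩
    rw [hu']
  have hcard : cutValue F {v} ≤ ({w' : W | w' ≠ v}).ncard := by
    calc cutValue F {v} ≤ ((fun w' => s(v, w')) '' {w' : W | w' ≠ v}).ncard :=
        Set.ncard_le_ncard hsub (Set.toFinite _)
      _ ≤ _ := Set.ncard_image_le (Set.toFinite _)
  have hco : {w' : W | w' ≠ v} = ({v} : Set W)ᶜ := by
    ext x; simp
  have hcompl : ({v} : Set W).ncard + (({v} : Set W)ᶜ).ncard = Nat.card W :=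
    Set.ncard_add_ncard_compl _
  rw [Set.ncard_singleton, Nat.card_eq_fintype_card] at hcompl
  rw [hco] at hcard
  omega

lemma count_cuts_top (F : Set (Sym2 W)) (k i : ℕ) (hk : 0 < k) (hi : 0 < i)
    (hconn : ∀ S : Set W, S.Nonempty → S ≠ Set.univ → k ≤ cutValue F S) :
    {S : Set W | S.Nonempty ∧ S ≠ Set.univ ∧ cutValue F S ≤ i * k}.ncard
      ≤ 2 ^ (2 * i) * Nat.choose (max (Fintype.card W) (2 * i)) (2 * i) := by
  classical
  set r : Setoid W := ⟨Eq, eq_equivalence⟩ with hr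
  have hcardq : Nat.card (Quotient r) = Fintype.card W := by
    rw [← Nat.card_eq_fintype_card (α := W)]
    refine (Nat.card_eq_of_bijective (Quotient.mk r) ⟨?_, ?_⟩).symm
    · intro a b h
      exact Quotient.eq.mp h
    · intro q
      exact Quotient.exists_rep q
  have hset : {S : Set W | S.Nonempty ∧ S ≠ Set.univ ∧ cutValue F S ≤ i * k}
      = cutsSet F r (i * k) := by
    ext S
    simp only [cutsSet, Set.mem_setOf_eq]
    constructor
    · rintro ⟨h1, h2, h3⟩
      refine ⟨?_, h1, h2, h3⟩
      intro a b hab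
      have hab' : a = b := hab
      rw [hab']
    · rintro ⟨_, h1, h2, h3⟩; exact ⟨h1, h2, h3⟩
  rw [hset, ← hcardq]
  exact count_cuts_aux F k i hk hi hconn (Nat.card (Quotient r)) r le_rfl

lemma count_pow_bound (n' n i : ℕ) (hn : n' ≤ n) (h4 : 4 ≤ n) :
    2 ^ (2 * i) * Nat.choose (max n' (2 * i)) (2 * i) ≤ n ^ (4 * i) := by
  rcases le_total n' (2 * i) with h | h
  · rw [Nat.max_eq_right h, Nat.choose_self, mul_one]
    calc 2 ^ (2 * i) ≤ n ^ (2 * i) := Nat.pow_le_pow_left (by omega) _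
      _ ≤ n ^ (4 * i) := Nat.pow_le_pow_right (by omega) (by omega)
  · rw [Nat.max_eq_left h]
    calc 2 ^ (2 * i) * Nat.choose n' (2 * i) ≤ n ^ (2 * i) * n' ^ (2 * i) :=
        Nat.mul_le_mul (Nat.pow_le_pow_left (by omega) _) (Nat.choose_le_pow _ _)
      _ ≤ n ^ (2 * i) * n ^ (2 * i) := Nat.mul_le_mul_left _ (Nat.pow_le_pow_left hn _)
      _ = n ^ (4 * i) := by rw [← pow_add]; congr 1; ring

end Bridge

set_option maxHeartbeats 2000000 in
/-- Let `C` be a `k`-connected graph on at most `n` vertices, let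
`ρ = 16(d+2) ln n`, and suppose each edge of `C` is included independently with probability
`p ≥ min {4ρ/k, 1}`. Then with probability at least `1 - n^{-d}`, every cut of the sampled
graph (with each sampled edge given weight `1/p`) has weight within a factor `(1 ± 1/2)` of the
value of the corresponding cut of `C`; in particular the sampled graph is connected. -/
theorem sampling_k_connected {W : Type*} [Fintype W] [DecidableEq W] (F : Set (Sym2 W))
    (hF : ∀ e ∈ F, ¬ e.IsDiag) (k : ℕ) (hk : 0 < k)
    (hconn : IsKConnected Set.univ F k) (n : ℕ) (hn : Fintype.card W ≤ n)
    (d p : ℝ) (hd : 0 < d) (hp1 : p ≤ 1)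
    (hp : min (4 * (16 * (d + 2) * Real.log n) / (k : ℝ)) 1 ≤ p) :
    1 - (n : ℝ) ^ (-d) ≤
      Pr (fun _ : Sym2 W => p)
        {σ | IsSparsification F {e | e ∈ F ∧ σ e = true} (fun _ => 1 / p) (1 / 2) ∧
          ∀ u v : W, connRel {e | e ∈ F ∧ σ e = true} u v} := by
  classical
  have hrpow0 : (0:ℝ) ≤ (n : ℝ) ^ (-d) := Real.rpow_nonneg (Nat.cast_nonneg n) _
  have hconn' : ∀ S : Set W, S.Nonempty → S ≠ Set.univ → k ≤ cutValue F S :=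
    fun S h1 h2 => hconn S (Set.subset_univ S) h1 h2
  by_cases hWcard : Fintype.card W ≤ 1
  · -- trivial graph: at most one vertex
    have hsub : Subsingleton W := Fintype.card_le_one_iff_subsingleton.mp hWcard
    have hev : {σ : Sym2 W → Bool |
        IsSparsification F {e | e ∈ F ∧ σ e = true} (fun _ => 1 / p) (1 / 2) ∧
          ∀ u v : W, connRel {e | e ∈ F ∧ σ e = true} u v} = Set.univ := by
      ext σ
      simp only [Set.mem_setOf_eq, Set.mem_univ, iff_true]
      constructor
      · intro S hSne hSuniv
        exfalso
        obtain ⟨a, ha⟩ := hSne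
        apply hSuniv
        ext x
        simp only [Set.mem_univ, iff_true]
        rwa [Subsingleton.elim x a]
      · intro u v
        rw [Subsingleton.elim u v]
        exact Relation.ReflTransGen.refl
    rw [hev]
    have h1 : Pr (fun _ : Sym2 W => p) Set.univ = 1 := by
      unfold Pr
      rw [Set.indicator_univ]
      exact sum_bernWeight
    rw [h1]; linarith
  · push_neg at hWcard
    have hW2 : 2 ≤ Fintype.card W := hWcard
    have hn2 : 2 ≤ n := le_trans hW2 hn
    set L := Real.log n with hLdef
    have hL2 : Real.log 2 ≤ L := Real.log_le_log (by norm_num) (by exact_mod_cast hn2)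
    have hlog2 : (0.6931471803 : ℝ) < Real.log 2 := Real.log_two_gt_d9
    have hL0 : 0 ≤ L := by linarith
    have hp0 : 0 ≤ p := by
      refine le_trans (le_min ?_ (by norm_num)) hp
      apply div_nonneg ?_ (Nat.cast_nonneg k)
      nlinarith
    rcases eq_or_lt_of_le hp1 with hpeq | hplt
    · -- p = 1: deterministic
      have hmem : (fun _ : Sym2 W => true) ∈ {σ : Sym2 W → Bool |
          IsSparsification F {e | e ∈ F ∧ σ e = true} (fun _ => 1 / p) (1 / 2) ∧
            ∀ u v : W, connRel {e | e ∈ F ∧ σ e = true} u v} := by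
        constructor
        · intro S h1 h2
          have hw := cutWeight_eq F p (fun _ : Sym2 W => true) S
          have hcnt_all : cnt (TS F S) (fun _ : Sym2 W => true) = (TS F S).card := by
            unfold cnt
            rw [Finset.filter_true_of_mem (fun _ _ => rfl)]
          rw [hcnt_all, TS_card] at hw
          rw [hw, hpeq]
          have hc0 : (0:ℝ) ≤ (cutValue F S : ℝ) := Nat.cast_nonneg _
          constructor <;> nlinarith
        · apply conn_of_cuts
          intro S h1 h2
          have hkc := hconn' S h1 h2
          have hnz : {e | e ∈ F ∧ Crosses S e}.ncard ≠ 0 := by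
            unfold cutValue at hkc; omega
          obtain ⟨e, he1, he2⟩ := Set.nonempty_of_ncard_ne_zero hnz
          exact ⟨e, ⟨he1, rfl⟩, he2⟩
      have hwt : bernWeight (fun _ : Sym2 W => p) (fun _ => true) = 1 := by
        unfold bernWeight
        rw [hpeq]
        simp
      have hPr : (1:ℝ) ≤ Pr (fun _ : Sym2 W => p) {σ : Sym2 W → Bool |
          IsSparsification F {e | e ∈ F ∧ σ e = true} (fun _ => 1 / p) (1 / 2) ∧
            ∀ u v : W, connRel {e | e ∈ F ∧ σ e = true} u v} := by
        calc (1:ℝ) = Set.indicator _ (bernWeight fun _ : Sym2 W => p) (fun _ => true) := by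
              rw [Set.indicator_of_mem hmem, hwt]
          _ ≤ _ := Finset.single_le_sum
              (fun σ _ => Set.indicator_nonneg (fun x _ => bernWeight_nonneg hp0 hp1 x) σ)
              (Finset.mem_univ _)
      linarith
    · -- main case : p < 1
      have hmin : 4 * (16 * (d + 2) * L) / (k:ℝ) ≤ p := by
        rcases min_le_iff.mp hp with h | h
        · exact h
        · linarith
      have hk0 : (0:ℝ) < k := by exact_mod_cast hk
      have hpk : 64 * (d + 2) * L ≤ p * k := by
        have h := (div_le_iff₀ hk0).mp hmin
        nlinarith
      have hppos : 0 < p := by nlinarith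
      have hkcard := k_le_pred_card F k hconn' hW2
      have hk88 : (88:ℝ) < k := by nlinarith
      have hk89 : 89 ≤ k := by
        have : (88:ℕ) < k := by exact_mod_cast hk88
        omega
      have hn16 : 16 ≤ n := by omega
      have hL16 : 4 * Real.log 2 ≤ L := by
        have h1 : Real.log 16 ≤ L := Real.log_le_log (by norm_num) (by exact_mod_cast hn16)
        have h16 : (16:ℝ) = 2 ^ (4:ℕ) := by norm_num
        rw [h16, Real.log_pow] at h1
        push_cast at h1
        linarith
      -- the bad events
      set Bad : Set W → Set (Sym2 W → Bool) := fun S =>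
        {σ | (cnt (TS F S) σ : ℝ) < (p * (TS F S).card) / 2}
          ∪ {σ | (3/2) * (p * (TS F S).card) < (cnt (TS F S) σ : ℝ)} with hBadDef
      set cutIdx : Finset (Finset W) := Finset.univ.filter
        (fun s : Finset W => (↑s : Set W).Nonempty ∧ (↑s : Set W) ≠ Set.univ) with hcutIdxDef
      set BadAll : Set (Sym2 W → Bool) := ⋃ s ∈ cutIdx, Bad ↑s with hBadAllDef
      -- a good outcome is in the event
      have hincl : BadAllᶜ ⊆ {σ : Sym2 W → Bool |
          IsSparsification F {e | e ∈ F ∧ σ e = true} (fun _ => 1 / p) (1 / 2) ∧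
            ∀ u v : W, connRel {e | e ∈ F ∧ σ e = true} u v} := by
        intro σ hσ
        have hgood : ∀ S : Set W, S.Nonempty → S ≠ Set.univ →
            (p * (TS F S).card) / 2 ≤ (cnt (TS F S) σ : ℝ) ∧
              (cnt (TS F S) σ : ℝ) ≤ (3/2) * (p * (TS F S).card) := by
          intro S h1 h2
          have hsmem : S.toFinset ∈ cutIdx := by
            rw [hcutIdxDef, Finset.mem_filter]
            refine ⟨Finset.mem_univ _, ?_, ?_⟩ <;> rw [Set.coe_toFinset]
            · exact h1
            · exact h2
          have hnot : σ ∉ Bad ↑S.toFinset := fun hbad => hσ (Set.mem_biUnion hsmem hbad)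
          rw [Set.coe_toFinset] at hnot
          constructor
          · by_contra hcon
            push_neg at hcon
            exact hnot (Or.inl hcon)
          · by_contra hcon
            push_neg at hcon
            exact hnot (Or.inr hcon)
        constructor
        · intro S h1 h2
          obtain ⟨hlo, hhi⟩ := hgood S h1 h2
          have hcw := cutWeight_eq F p σ S
          have hcv : ((TS F S).card : ℝ) = (cutValue F S : ℝ) := by
            exact_mod_cast congrArg (Nat.cast (R := ℝ)) (TS_card F S)
          rw [hcw, ← hcv]
          have heq : (cnt (TS F S) σ : ℝ) * (1 / p) = (cnt (TS F S) σ : ℝ) / p := by ring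
          rw [heq]
          constructor
          · rw [le_div_iff₀ hppos]
            nlinarith
          · rw [div_le_iff₀ hppos]
            nlinarith
        · apply conn_of_cuts
          intro S h1 h2
          obtain ⟨hlo, _⟩ := hgood S h1 h2
          have hcpos : 0 < (TS F S).card := by
            rw [TS_card]
            have := hconn' S h1 h2
            omega
          have hcnt : cnt (TS F S) σ ≠ 0 := by
            intro hzero
            rw [hzero] at hlo
            have hc1 : (1:ℝ) ≤ ((TS F S).card : ℝ) := by exact_mod_cast hcpos
            norm_num at hlo
            nlinarith
          obtain ⟨e, he⟩ := Finset.card_pos.mp (Nat.pos_of_ne_zero hcnt)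
          have he' := Finset.mem_filter.mp he
          have hem := (TS_mem F S e).mp he'.1
          exact ⟨e, ⟨hem.1, he'.2⟩, hem.2⟩
      -- probability of the bad events
      set E : ℝ := p * k / 10 with hEdef
      set G : ℝ := E - 4 * L with hGdef
      have hG1 : 6.4 * d * L + 8.8 * L ≤ G := by
        rw [hGdef, hEdef]
        nlinarith
      have hL277 : (2.772:ℝ) ≤ L := by nlinarith
      have hGge1 : (1:ℝ) ≤ G := by nlinarith
      have hexpG : Real.exp (-G) ≤ 1/2 := by
        have h1 : Real.exp (-G) ≤ Real.exp (-1) := Real.exp_le_exp.mpr (by linarith)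
        have h2 : Real.exp (-1) ≤ 1/2 := by
          rw [Real.exp_neg]
          have h3 : (2:ℝ) ≤ Real.exp 1 := by
            have := Real.exp_one_gt_d9; linarith
          have := inv_anti₀ (by norm_num : (0:ℝ) < 2) h3
          linarith
        linarith
      have hexpGnn : (0:ℝ) ≤ Real.exp (-G) := (Real.exp_pos _).le
      set M : ℕ := Nat.card (Sym2 W) with hMdef
      have hM1 : 1 ≤ M := by
        rw [hMdef]
        have hpos : 0 < Fintype.card W := by omega
        obtain ⟨v⟩ := Fintype.card_pos_iff.mp hpos
        have : Nonempty (Sym2 W) := ⟨s(v, v)⟩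
        exact Nat.one_le_iff_ne_zero.mpr (Nat.card_ne_zero.mpr ⟨this, inferInstance⟩)
      set bnd : Finset W → ℕ := fun s => (cutValue F ↑s + k - 1) / k with hbndDef
      have hcvpos : ∀ s ∈ cutIdx, k ≤ cutValue F (↑s : Set W) ∧ cutValue F (↑s : Set W) ≤ M := by
        intro s hs
        rw [hcutIdxDef, Finset.mem_filter] at hs
        obtain ⟨-, h1, h2⟩ := hs
        constructor
        · exact hconn' _ h1 h2
        · rw [hMdef, ← Set.ncard_univ]
          exact Set.ncard_le_ncard (Set.subset_univ _) (Set.toFinite _)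
      have hbnd_mem : ∀ s ∈ cutIdx, bnd s ∈ Finset.Icc 1 M := by
        intro s hs
        obtain ⟨hc1, hcM⟩ := hcvpos s hs
        rw [Finset.mem_Icc, hbndDef]
        constructor
        · rw [Nat.le_div_iff_mul_le hk]
          omega
        · apply Nat.div_le_of_le_mul
          -- cutValue + k - 1 ≤ k * M
          have h1 : M - 1 ≤ (M - 1) * k := Nat.le_mul_of_pos_right (M - 1) hk
          have h2 : (M - 1) * k = M * k - 1 * k := Nat.sub_mul M 1 k
          rw [one_mul] at h2
          have h3 : k ≤ M * k := Nat.le_mul_of_pos_left k hM1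
          rw [mul_comm k M]
          omega
      -- per-cut probability bound
      have hPrBad : ∀ s ∈ cutIdx, Pr (fun _ : Sym2 W => p) (Bad ↑s)
          ≤ 2 * Real.exp (-(p * (cutValue F (↑s : Set W) : ℝ)) / 10) := by
        intro s hs
        have h1 := Pr_union_le hp0 hplt.le
          {σ : Sym2 W → Bool | (cnt (TS F ↑s) σ : ℝ) < (p * (TS F ↑s).card) / 2}
          {σ : Sym2 W → Bool | (3/2) * (p * (TS F ↑s).card) < (cnt (TS F ↑s) σ : ℝ)}
        have h2 := chernoff_lower hp0 hplt.le (TS F (↑s : Set W))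
        have h3 := chernoff_upper hp0 hplt.le (TS F (↑s : Set W))
        have hcv : ((TS F (↑s : Set W)).card : ℝ) = (cutValue F (↑s : Set W) : ℝ) := by
          exact_mod_cast congrArg (Nat.cast (R := ℝ)) (TS_card F ↑s)
        rw [hBadDef]
        calc Pr (fun _ : Sym2 W => p) _ ≤ _ + _ := h1
          _ ≤ 2 * Real.exp (-(p * ((TS F (↑s : Set W)).card : ℝ)) / 10) := by linarith
          _ = 2 * Real.exp (-(p * (cutValue F (↑s : Set W) : ℝ)) / 10) := by rw [hcv]
      -- fiber bound
      have hfiber : ∀ i ∈ Finset.Icc 1 M,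
          ∑ s ∈ cutIdx.filter (fun s => bnd s = i), Pr (fun _ : Sym2 W => p) (Bad ↑s)
            ≤ ((n:ℝ) ^ (4 * i)) * (2 * Real.exp (-(E * ((max 1 (i - 1) : ℕ) : ℝ)))) := by
        intro i hi
        rw [Finset.mem_Icc] at hi
        have helem : ∀ s ∈ cutIdx.filter (fun s => bnd s = i),
            Pr (fun _ : Sym2 W => p) (Bad ↑s)
              ≤ 2 * Real.exp (-(E * ((max 1 (i - 1) : ℕ) : ℝ))) := by
          intro s hs
          rw [Finset.mem_filter] at hs
          obtain ⟨hs1, hs2⟩ := hs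
          have hb := hPrBad s hs1
          obtain ⟨hc1, -⟩ := hcvpos s hs1
          -- k * max 1 (i-1) ≤ cutValue
          have hio : k * (max 1 (i - 1)) ≤ cutValue F (↑s : Set W) := by
            rcases Nat.lt_or_ge i 2 with hi2 | hi2
            · have hmx : max 1 (i - 1) = 1 := Nat.max_eq_left (by omega)
              rw [hmx, mul_one]
              exact hc1
            · obtain ⟨i', rfl⟩ : ∃ i', i = i' + 2 := ⟨i - 2, by omega⟩
              have hmx : max 1 (i' + 2 - 1) = i' + 1 := by
                rw [show i' + 2 - 1 = i' + 1 from rfl, Nat.max_eq_right (by omega)]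
              rw [hmx]
              have hdiv : i' + 2 ≤ bnd s := le_of_eq hs2.symm
              rw [hbndDef] at hdiv
              have h1 : (i' + 2) * k ≤ cutValue F ↑s + k - 1 :=
                (Nat.le_div_iff_mul_le hk).mp hdiv
              have h2 : cutValue F ↑s + k - 1 = (cutValue F ↑s - 1) + k := by omega
              have h3 : (i' + 2) * k = (i' + 1) * k + k := Nat.succ_mul (i' + 1) k
              rw [h2, h3] at h1
              have h4 : (i' + 1) * k ≤ cutValue F ↑s - 1 := by omega
              calc k * (i' + 1) = (i' + 1) * k := mul_comm _ _
                _ ≤ cutValue F ↑s - 1 := h4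
                _ ≤ cutValue F ↑s := Nat.sub_le _ _
          have hio' : E * ((max 1 (i - 1) : ℕ) : ℝ) ≤ p * (cutValue F (↑s : Set W) : ℝ) / 10 := by
            rw [hEdef]
            have hioR : (k:ℝ) * ((max 1 (i - 1) : ℕ) : ℝ) ≤ (cutValue F (↑s : Set W) : ℝ) := by
              exact_mod_cast hio
            nlinarith
          refine hb.trans ?_
          have := Real.exp_le_exp.mpr (by linarith : -(p * (cutValue F (↑s : Set W) : ℝ)) / 10
            ≤ -(E * ((max 1 (i - 1) : ℕ) : ℝ)))
          linarith
        have hcardfiber : (cutIdx.filter (fun s => bnd s = i)).card ≤ n ^ (4 * i) := by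
          have hsubS : ∀ s ∈ cutIdx.filter (fun s => bnd s = i),
              (↑s : Set W) ∈ (Set.toFinite {S : Set W | S.Nonempty ∧ S ≠ Set.univ ∧
                cutValue F S ≤ i * k}).toFinset := by
            intro s hs
            rw [Set.Finite.mem_toFinset]
            rw [Finset.mem_filter] at hs
            obtain ⟨hs1, hs2⟩ := hs
            obtain ⟨hc1, -⟩ := hcvpos s hs1
            rw [hcutIdxDef, Finset.mem_filter] at hs1
            refine ⟨hs1.2.1, hs1.2.2, ?_⟩
            -- cutValue ≤ i * k
            have hlt : bnd s < i + 1 := by omega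
            rw [hbndDef] at hlt
            have h1 : cutValue F ↑s + k - 1 < (i + 1) * k := (Nat.div_lt_iff_lt_mul hk).mp hlt
            have h2 : (i + 1) * k = i * k + k := Nat.succ_mul i k
            have h3 : cutValue F ↑s + k - 1 = (cutValue F ↑s - 1) + k := by omega
            rw [h2, h3] at h1
            have h4 : cutValue F ↑s - 1 < i * k := by omega
            omega
          have hinj2 : Set.InjOn (fun s : Finset W => (↑s : Set W))
              ↑(cutIdx.filter (fun s => bnd s = i)) :=
            fun a _ b _ h => Finset.coe_injective h
          have hcard1 := Finset.card_le_card_of_injOn _ hsubS hinj2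
          have hcard2 : (Set.toFinite {S : Set W | S.Nonempty ∧ S ≠ Set.univ ∧
              cutValue F S ≤ i * k}).toFinset.card
              = {S : Set W | S.Nonempty ∧ S ≠ Set.univ ∧ cutValue F S ≤ i * k}.ncard :=
            (Set.ncard_eq_toFinset_card _ _).symm
          have hcount := count_cuts_top F k i hk (by omega : 0 < i) hconn'
          have hpow := count_pow_bound (Fintype.card W) n i hn (by omega : 4 ≤ n)
          calc (cutIdx.filter (fun s => bnd s = i)).card
              ≤ (Set.toFinite {S : Set W | S.Nonempty ∧ S ≠ Set.univ ∧
                  cutValue F S ≤ i * k}).toFinset.card := hcard1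
            _ = {S : Set W | S.Nonempty ∧ S ≠ Set.univ ∧ cutValue F S ≤ i * k}.ncard := hcard2
            _ ≤ 2 ^ (2 * i) * Nat.choose (max (Fintype.card W) (2 * i)) (2 * i) := hcount
            _ ≤ n ^ (4 * i) := hpow
        calc ∑ s ∈ cutIdx.filter (fun s => bnd s = i), Pr (fun _ : Sym2 W => p) (Bad ↑s)
            ≤ (cutIdx.filter (fun s => bnd s = i)).card
                • (2 * Real.exp (-(E * ((max 1 (i - 1) : ℕ) : ℝ)))) :=
              Finset.sum_le_card_nsmul _ _ _ helem
          _ = ((cutIdx.filter (fun s => bnd s = i)).card : ℝ)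
                * (2 * Real.exp (-(E * ((max 1 (i - 1) : ℕ) : ℝ)))) := nsmul_eq_mul _ _
          _ ≤ ((n:ℝ) ^ (4 * i)) * (2 * Real.exp (-(E * ((max 1 (i - 1) : ℕ) : ℝ)))) := by
              apply mul_le_mul_of_nonneg_right ?_ (by positivity)
              have : ((cutIdx.filter (fun s => bnd s = i)).card : ℝ) ≤ ((n ^ (4 * i) : ℕ) : ℝ) :=
                Nat.cast_le.mpr hcardfiber
              push_cast at this
              exact this
      -- uniform geometric bound on band terms
      have hnpos : (0:ℝ) < (n:ℝ) := by exact_mod_cast (by omega : 0 < n)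
      have hnL : (n:ℝ) = Real.exp L := (Real.exp_log hnpos).symm
      have hband : ∀ i ∈ Finset.Icc 1 M,
          ((n:ℝ) ^ (4 * i)) * (2 * Real.exp (-(E * ((max 1 (i - 1) : ℕ) : ℝ))))
            ≤ (2 * Real.exp (4 * L) * Real.exp (-G)) * (1/2) ^ (i - 2) := by
        intro i hi
        rw [Finset.mem_Icc] at hi
        have hpow : (n:ℝ) ^ (4 * i) = Real.exp (((4 * i : ℕ) : ℝ) * L) := by
          rw [hnL, ← Real.exp_nat_mul]
        rcases Nat.lt_or_ge i 2 with hi2 | hi2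
        · -- i = 1
          have hieq : i = 1 := by omega
          subst hieq
          have hmx : max 1 (1 - 1) = 1 := rfl
          rw [hmx, hpow]
          have hLHS : Real.exp ((((4 * 1 : ℕ)) : ℝ) * L) * (2 * Real.exp (-(E * ((1:ℕ) : ℝ))))
              = 2 * Real.exp (-G) := by
            calc Real.exp ((((4 * 1 : ℕ)) : ℝ) * L) * (2 * Real.exp (-(E * ((1:ℕ) : ℝ))))
                = 2 * Real.exp ((((4 * 1 : ℕ)) : ℝ) * L + -(E * ((1:ℕ) : ℝ))) := by
                  rw [Real.exp_add]; ring
              _ = 2 * Real.exp (-G) := by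
                  rw [show (((4 * 1 : ℕ)) : ℝ) * L + -(E * ((1:ℕ) : ℝ)) = -G from by
                    push_cast; rw [hGdef]; ring]
          rw [hLHS]
          have h1 : (1:ℝ) ≤ Real.exp (4 * L) := by
            rw [show (1:ℝ) = Real.exp 0 from (Real.exp_zero).symm]
            exact Real.exp_le_exp.mpr (by linarith)
          have h2 : ((1:ℝ)/2) ^ (1 - 2) = 1 := by norm_num
          rw [h2, mul_one]
          nlinarith [Real.exp_pos (-G)]
        · -- i ≥ 2
          obtain ⟨i', rfl⟩ : ∃ i', i = i' + 2 := ⟨i - 2, by omega⟩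
          have hmx : (max 1 (i' + 2 - 1) : ℕ) = i' + 1 := by
            rw [show i' + 2 - 1 = i' + 1 from rfl, Nat.max_eq_right (by omega)]
          rw [hmx, hpow]
          have hkey : (2 * Real.exp (4 * L) * Real.exp (-G)) * Real.exp (-G) ^ i'
              = 2 * Real.exp (4 * L + -G + (i' : ℝ) * -G) := by
            rw [Real.exp_add, Real.exp_add, Real.exp_nat_mul]
            ring
          have hLHS : Real.exp (((4 * (i' + 2) : ℕ) : ℝ) * L)
                * (2 * Real.exp (-(E * ((i' + 1 : ℕ) : ℝ))))
              = (2 * Real.exp (4 * L) * Real.exp (-G)) * Real.exp (-G) ^ i' := by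
            calc Real.exp (((4 * (i' + 2) : ℕ) : ℝ) * L)
                  * (2 * Real.exp (-(E * ((i' + 1 : ℕ) : ℝ))))
                = 2 * Real.exp ((((4 * (i' + 2) : ℕ) : ℝ) * L) + -(E * ((i' + 1 : ℕ) : ℝ))) := by
                  rw [Real.exp_add]; ring
              _ = 2 * Real.exp (4 * L + -G + (i' : ℝ) * -G) := by
                  rw [show (((4 * (i' + 2) : ℕ) : ℝ) * L) + -(E * ((i' + 1 : ℕ) : ℝ))
                      = 4 * L + -G + (i' : ℝ) * -G from by push_cast; rw [hGdef]; ring]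
              _ = (2 * Real.exp (4 * L) * Real.exp (-G)) * Real.exp (-G) ^ i' := hkey.symm
          rw [hLHS]
          have hidx : (i' + 2) - 2 = i' := by omega
          rw [hidx]
          apply mul_le_mul_of_nonneg_left (pow_le_pow_left₀ hexpGnn hexpG i') ?_
          positivity
      -- geometric series bound
      have hgeo : ∑ i ∈ Finset.Icc 1 M, ((1:ℝ)/2) ^ (i - 2) ≤ 8 := by
        have hterm : ∀ i ∈ Finset.Icc 1 M, ((1:ℝ)/2) ^ (i - 2) ≤ 4 * (1/2) ^ i := by
          intro i _
          have h1 : ((1:ℝ)/2) ^ ((i - 2) + 2) ≤ (1/2) ^ i :=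
            pow_le_pow_of_le_one (by norm_num) (by norm_num) (by omega)
          have h2 : ((1:ℝ)/2) ^ ((i - 2) + 2) = (1/2) ^ (i - 2) * (1/4) := by
            rw [pow_add]; norm_num
          nlinarith [pow_nonneg (by norm_num : (0:ℝ) ≤ 1/2) (i - 2)]
        calc ∑ i ∈ Finset.Icc 1 M, ((1:ℝ)/2) ^ (i - 2)
            ≤ ∑ i ∈ Finset.Icc 1 M, 4 * ((1:ℝ)/2) ^ i := Finset.sum_le_sum hterm
          _ ≤ ∑ i ∈ Finset.range (M + 1), 4 * ((1:ℝ)/2) ^ i := by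
              apply Finset.sum_le_sum_of_subset_of_nonneg
              · intro i hi
                rw [Finset.mem_Icc] at hi
                rw [Finset.mem_range]
                omega
              · intro i _ _
                positivity
          _ = 4 * ∑ i ∈ Finset.range (M + 1), ((1:ℝ)/2) ^ i := by rw [Finset.mul_sum]
          _ ≤ 4 * 2 := by
              have hg := geom_sum_eq (by norm_num : ((1:ℝ)/2) ≠ 1) (M + 1)
              have hle : ((1:ℝ)/2) ^ (M + 1) ≤ 1 := pow_le_one₀ (by norm_num) (by norm_num)
              have hnn : (0:ℝ) ≤ ((1:ℝ)/2) ^ (M + 1) := by positivity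
              rw [hg]
              rw [show ((1:ℝ)/2 - 1) = -(1/2) by norm_num, div_neg, div_div_eq_mul_div]
              nlinarith
          _ = 8 := by norm_num
      -- total bound
      have hfin16 : 16 * Real.exp (4 * L - G) ≤ Real.exp (-(d * L)) := by
        have h1 : 4 * L - G + 4 ≤ -(d * L) := by nlinarith
        have h2 : (16:ℝ) ≤ Real.exp 4 := by
          have e4 : Real.exp 4 = Real.exp 1 ^ (4:ℕ) := by
            rw [← Real.exp_nat_mul]; norm_num
          have h3 : (2.7182818283:ℝ) ^ (4:ℕ) ≤ Real.exp 1 ^ (4:ℕ) :=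
            pow_le_pow_left₀ (by norm_num) Real.exp_one_gt_d9.le 4
          rw [e4]
          nlinarith
        calc 16 * Real.exp (4 * L - G) ≤ Real.exp 4 * Real.exp (4 * L - G) :=
            mul_le_mul_of_nonneg_right h2 (Real.exp_pos _).le
          _ = Real.exp (4 + (4 * L - G)) := (Real.exp_add _ _).symm
          _ ≤ Real.exp (-(d * L)) := Real.exp_le_exp.mpr (by linarith)
      have hPrBadAll : Pr (fun _ : Sym2 W => p) BadAll ≤ (n:ℝ) ^ (-d) := by
        have hstep1 := Pr_union_le_sum hp0 hplt.le cutIdx (fun s => Bad ↑s)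
        have hsplit : ∑ s ∈ cutIdx, Pr (fun _ : Sym2 W => p) (Bad ↑s)
            = ∑ i ∈ Finset.Icc 1 M, ∑ s ∈ cutIdx.filter (fun s => bnd s = i),
                Pr (fun _ : Sym2 W => p) (Bad ↑s) :=
          (Finset.sum_fiberwise_of_maps_to hbnd_mem _).symm
        have hrd : (n:ℝ) ^ (-d) = Real.exp (-(d * L)) := by
          rw [Real.rpow_def_of_pos hnpos]
          congr 1
          rw [← hLdef]
          ring
        calc Pr (fun _ : Sym2 W => p) BadAll
            ≤ ∑ s ∈ cutIdx, Pr (fun _ : Sym2 W => p) (Bad ↑s) := hstep1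
          _ = ∑ i ∈ Finset.Icc 1 M, ∑ s ∈ cutIdx.filter (fun s => bnd s = i),
                Pr (fun _ : Sym2 W => p) (Bad ↑s) := hsplit
          _ ≤ ∑ i ∈ Finset.Icc 1 M,
                ((n:ℝ) ^ (4 * i)) * (2 * Real.exp (-(E * ((max 1 (i - 1) : ℕ) : ℝ)))) :=
              Finset.sum_le_sum hfiber
          _ ≤ ∑ i ∈ Finset.Icc 1 M,
                (2 * Real.exp (4 * L) * Real.exp (-G)) * ((1:ℝ)/2) ^ (i - 2) :=
              Finset.sum_le_sum hband
          _ = (2 * Real.exp (4 * L) * Real.exp (-G))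
                * ∑ i ∈ Finset.Icc 1 M, ((1:ℝ)/2) ^ (i - 2) := by rw [Finset.mul_sum]
          _ ≤ (2 * Real.exp (4 * L) * Real.exp (-G)) * 8 := by
              apply mul_le_mul_of_nonneg_left hgeo
              positivity
          _ = 16 * (Real.exp (4 * L) * Real.exp (-G)) := by ring
          _ = 16 * Real.exp (4 * L - G) := by rw [← Real.exp_add]; ring_nf
          _ ≤ Real.exp (-(d * L)) := hfin16
          _ = (n:ℝ) ^ (-d) := hrd.symm
      have hcompl := Pr_compl hp0 hplt.le BadAll
      have hmono := Pr_mono hp0 hplt.le hincl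
      calc 1 - (n:ℝ) ^ (-d) ≤ 1 - Pr (fun _ : Sym2 W => p) BadAll := by linarith
        _ = Pr (fun _ : Sym2 W => p) BadAllᶜ := hcompl.symm
        _ ≤ _ := hmono

end GraphSparsification
end

section
/- Every finite undirected graph C admits a partition of its vertex set into disjoint sets A and B with A ∪ B = V(C) and |A| ≥ |V(C)|/2, such that every vertex v ∈ A has at least as many edges to vertices in B as to vertices in A (i.e., at least half of v's edges within C go to B). -/
namespace GraphSparsification

open scoped BigOperators

variable {V : Type*}

namespace HalfPartitionAux

open scoped Classical

variable {V : Type*} [Fintype V]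

noncomputable def gE (E : Set (Sym2 V)) (u w : V) : ℕ := if s(u, w) ∈ E then 1 else 0

omit [Fintype V] in
lemma gE_symm (E : Set (Sym2 V)) (u w : V) : gE E u w = gE E w u := by
  unfold gE; rw [Sym2.eq_swap]

noncomputable def cut2 (E : Set (Sym2 V)) (S : Finset V) : ℕ :=
  ∑ u ∈ S, ∑ w ∈ Sᶜ, gE E u w

lemma cut2_compl (E : Set (Sym2 V)) (S : Finset V) : cut2 E Sᶜ = cut2 E S := by
  unfold cut2
  rw [compl_compl, Finset.sum_comm]
  exact Finset.sum_congr rfl fun w _ => Finset.sum_congr rfl fun u _ => (gE_symm E w u).symm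

lemma cut2_erase (E : Set (Sym2 V)) (hE : ∀ e ∈ E, ¬ e.IsDiag) {S : Finset V} {v : V}
    (hv : v ∈ S) :
    cut2 E (S.erase v) + ∑ w ∈ Sᶜ, gE E v w = cut2 E S + ∑ u ∈ S, gE E u v := by
  have hvv : gE E v v = 0 := by
    unfold gE
    split
    · exact absurd (Sym2.mk_isDiag_iff.mpr rfl) (hE _ ‹_›)
    · rfl
  have hcompl : (S.erase v)ᶜ = insert v Sᶜ := by
    ext x; simp [Finset.mem_erase, or_comm, Decidable.not_and_iff_or_not]
  have hvnc : v ∉ Sᶜ := by simpa using hv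
  have h1 : cut2 E (S.erase v)
      = ∑ u ∈ S.erase v, gE E u v + ∑ u ∈ S.erase v, ∑ w ∈ Sᶜ, gE E u w := by
    unfold cut2
    rw [hcompl, ← Finset.sum_add_distrib]
    exact Finset.sum_congr rfl fun u _ => Finset.sum_insert hvnc
  have h2 : ∑ u ∈ S.erase v, gE E u v = ∑ u ∈ S, gE E u v :=
    Finset.sum_erase _ hvv
  have h3 : ∑ u ∈ S.erase v, (∑ w ∈ Sᶜ, gE E u w) + ∑ w ∈ Sᶜ, gE E v w = cut2 E S :=
    Finset.sum_erase_add S _ hv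
  rw [h1, h2]
  omega

/-- At a max cut, each vertex of `S` has at least as many `E`-neighbours in `Sᶜ` as in `S`. -/
lemma maxcut_side (E : Set (Sym2 V)) (hE : ∀ e ∈ E, ¬ e.IsDiag) {S : Finset V}
    (hmax : ∀ T : Finset V, cut2 E T ≤ cut2 E S) {v : V} (hv : v ∈ S) :
    ∑ u ∈ S, gE E u v ≤ ∑ u ∈ Sᶜ, gE E u v := by
  have h := cut2_erase E hE hv
  have h2 := hmax (S.erase v)
  have h3 : ∑ w ∈ Sᶜ, gE E v w = ∑ u ∈ Sᶜ, gE E u v :=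
    Finset.sum_congr rfl fun u _ => gE_symm E v u
  omega

theorem exists_half_partition' (E : Set (Sym2 V))
    (hE : ∀ e ∈ E, ¬ e.IsDiag) :
    ∃ A B : Set V, A ∪ B = Set.univ ∧ Disjoint A B ∧
      Fintype.card V ≤ 2 * A.ncard ∧
      ∀ v ∈ A, {u | u ∈ A ∧ s(u, v) ∈ E}.ncard ≤ {u | u ∈ B ∧ s(u, v) ∈ E}.ncard := by
  classical
  obtain ⟨S, -, hmax⟩ := Finset.exists_max_image (Finset.univ : Finset (Finset V))
    (cut2 E) ⟨∅, Finset.mem_univ _⟩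
  have hmax' : ∀ T : Finset V, cut2 E T ≤ cut2 E S := fun T => hmax T (Finset.mem_univ T)
  have hmaxc : ∀ T : Finset V, cut2 E T ≤ cut2 E Sᶜ := by
    intro T; rw [cut2_compl]; exact hmax' T
  -- degree conversion
  have hset : ∀ (T : Finset V) (v : V),
      {u | u ∈ (↑T : Set V) ∧ s(u, v) ∈ E}.ncard = ∑ u ∈ T, gE E u v := by
    intro T v
    have : {u | u ∈ (↑T : Set V) ∧ s(u, v) ∈ E}
        = ↑(T.filter (fun u => s(u, v) ∈ E)) := by
      ext x; simp
    rw [this, Set.ncard_coe_finset, Finset.card_filter]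
    rfl
  have hcard : S.card + Sᶜ.card = Fintype.card V := Finset.card_add_card_compl S
  by_cases hbig : Fintype.card V ≤ 2 * S.card
  · refine ⟨↑S, ↑Sᶜ, ?_, ?_, ?_, ?_⟩
    · rw [Finset.coe_compl]; exact Set.union_compl_self _
    · rw [Finset.coe_compl]; exact disjoint_compl_right
    · rwa [Set.ncard_coe_finset]
    · intro v hv
      rw [hset, hset]
      exact maxcut_side E hE hmax' hv
  · refine ⟨↑Sᶜ, ↑S, ?_, ?_, ?_, ?_⟩
    · rw [Finset.coe_compl]; exact Set.compl_union_self _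
    · rw [Finset.coe_compl]; exact disjoint_compl_left
    · rw [Set.ncard_coe_finset]; omega
    · intro v hv
      rw [hset, hset]
      have := maxcut_side E hE hmaxc (S := Sᶜ) hv
      rwa [compl_compl] at this

end HalfPartitionAux

/-- Every finite undirected graph `C` admits a partition of its vertex set into
disjoint sets `A` and `B` with `A ∪ B = V(C)` and `|A| ≥ |V(C)|/2`, such that every vertex
`v ∈ A` has at least as many edges to vertices in `B` as to vertices in `A`. -/
theorem exists_half_partition {V : Type*} [Fintype V] (E : Set (Sym2 V))
    (hE : ∀ e ∈ E, ¬ e.IsDiag) :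
    ∃ A B : Set V, A ∪ B = Set.univ ∧ Disjoint A B ∧
      Fintype.card V ≤ 2 * A.ncard ∧
      ∀ v ∈ A, {u | u ∈ A ∧ s(u, v) ∈ E}.ncard ≤ {u | u ∈ B ∧ s(u, v) ∈ E}.ncard :=
  HalfPartitionAux.exists_half_partition' E hE

end GraphSparsification
end
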